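/- arXiv:1904.02550 — 5 statements merged into one kernel-verified Lean document; each statement's English description precedes it below -/
import Mathlib

section
/- For any prime p > 3, the sum over k from 1 to p-1 of k times the sum over 1 ≤ i < j ≤ k of H_k^{(2)}/(i j) is congruent to 7/8 + (1/2)·B_{p-3} modulo p. -/
/-- `harmonic' k m` is the `k`-th harmonic number of order `m`: `∑_{i=1}^k 1/i^m`. -/
def harmonic' (k m : ℕ) : ℚ := ∑ i ∈ Finset.Icc 1 k, 1 / (i : ℚ) ^ m

namespace Stmt9

open Finset

/-! ### Generic sum-swapping helpers -/

theorem Ico_one_eq_Icc (j : ℕ) : Finset.Ico 1 j = Finset.Icc 1 (j - 1) := by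
  ext x; simp only [mem_Ico, mem_Icc]; omega

theorem swap_le {M : Type*} [AddCommMonoid M] (N : ℕ) (f : ℕ → ℕ → M) :
    ∑ k ∈ Icc 1 N, ∑ j ∈ Icc 1 k, f j k = ∑ j ∈ Icc 1 N, ∑ k ∈ Icc j N, f j k := by
  have h := Finset.sum_Ico_Ico_comm 1 (N + 1) (fun j k => f j k)
  simpa [Finset.Ico_add_one_right_eq_Icc] using h.symm

theorem swap_lt {M : Type*} [AddCommMonoid M] (N : ℕ) (f : ℕ → ℕ → M) :
    ∑ k ∈ Icc 1 N, ∑ j ∈ Icc 1 (k - 1), f j k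
      = ∑ j ∈ Icc 1 N, ∑ k ∈ Icc (j + 1) N, f j k := by
  have h := Finset.sum_Ico_Ico_comm' 1 (N + 1) (fun j k => f j k)
  simp only [Finset.Ico_add_one_right_eq_Icc] at h
  calc ∑ k ∈ Icc 1 N, ∑ j ∈ Icc 1 (k - 1), f j k
      = ∑ k ∈ Icc 1 N, ∑ j ∈ Ico 1 k, f j k :=
        Finset.sum_congr rfl fun k _ => by rw [Ico_one_eq_Icc]
    _ = ∑ j ∈ Icc 1 N, ∑ k ∈ Icc (j + 1) N, f j k := h.symm

theorem sum_tail {M : Type*} [AddCommGroup M] (f : ℕ → M) {m N : ℕ} (h : m ≤ N) :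
    ∑ k ∈ Icc (m + 1) N, f k = ∑ k ∈ Icc 1 N, f k - ∑ k ∈ Icc 1 m, f k := by
  have h2 := Finset.sum_Ioc_consecutive f (Nat.zero_le m) h
  simp only [← Finset.Icc_add_one_left_eq_Ioc, Nat.succ_eq_add_one, zero_add] at h2
  exact eq_sub_of_add_eq' h2

theorem sum_range_to_Icc {M : Type*} [AddCommMonoid M] (f : ℕ → M) (h : f 0 = 0) (n : ℕ) :
    ∑ i ∈ range (n + 1), f i = ∑ i ∈ Icc 1 n, f i := by
  rw [Finset.range_eq_Ico, Finset.sum_eq_sum_Ico_succ_bot (Nat.succ_pos n), h, zero_add,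
    Nat.succ_eq_add_one, zero_add, Finset.Ico_add_one_right_eq_Icc]

variable (p : ℕ) [hp : Fact p.Prime]

/-! ### Basic facts in `ZMod p` -/

theorem cast_ne_zero' {i : ℕ} (h1 : 1 ≤ i) (h2 : i ≤ p - 1) : (i : ZMod p) ≠ 0 := by
  have hple := hp.out.two_le
  intro h
  rw [ZMod.natCast_eq_zero_iff] at h
  have := Nat.le_of_dvd (by omega) h
  omega

theorem castp1 : ((p - 1 : ℕ) : ZMod p) = -1 := by
  have hple := hp.out.two_le
  have : ((p - 1 : ℕ) : ZMod p) = (p : ℕ) - 1 := by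
    push_cast [Nat.cast_sub (by omega : 1 ≤ p)]; ring
  rw [this, ZMod.natCast_self]; ring

theorem castp2 : ((p - 2 : ℕ) : ZMod p) = -2 := by
  have hple := hp.out.two_le
  have : ((p - 2 : ℕ) : ZMod p) = (p : ℕ) - 2 := by
    push_cast [Nat.cast_sub (by omega : 2 ≤ p)]; ring
  rw [this, ZMod.natCast_self]; ring

theorem sum_Icc_units {M : Type*} [AddCommMonoid M] (F : ZMod p → M) :
    ∑ i ∈ Icc 1 (p - 1), F (i : ZMod p) = ∑ x : (ZMod p)ˣ, F x := by
  classical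
  have hple := hp.out.two_le
  have hnz : NeZero p := ⟨by omega⟩
  have h1 : ∑ i ∈ Icc 1 (p - 1), F (i : ZMod p)
      = ∑ x ∈ Finset.univ \ {(0 : ZMod p)}, F x := by
    refine Finset.sum_nbij' (fun i => (i : ZMod p)) (fun x => x.val) ?_ ?_ ?_ ?_ ?_
    · intro a ha
      simp only [mem_Icc] at ha
      simp only [Finset.mem_sdiff, Finset.mem_univ, Finset.mem_singleton, true_and]
      exact cast_ne_zero' p ha.1 ha.2
    · intro x hx
      simp only [Finset.mem_sdiff, Finset.mem_univ, Finset.mem_singleton, true_and] at hx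
      have hv : x.val < p := ZMod.val_lt x
      have hv0 : x.val ≠ 0 := fun h => hx ((ZMod.val_eq_zero x).mp h)
      simp only [mem_Icc]; omega
    · intro a ha
      simp only [mem_Icc] at ha
      exact ZMod.val_cast_of_lt (by omega)
    · intro x _
      exact ZMod.natCast_rightInverse x
    · intro a _; rfl
  have h2 : ∑ x ∈ Finset.univ \ {(0 : ZMod p)}, F x = ∑ x : (ZMod p)ˣ, F x := by
    let φ : (ZMod p)ˣ ↪ ZMod p := ⟨fun x => (x : ZMod p), fun _ _ h => Units.ext h⟩
    have himg : Finset.univ.map φ = Finset.univ \ {(0 : ZMod p)} := by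
      ext x
      simp only [Finset.mem_map, Finset.mem_univ, true_and, Finset.mem_sdiff,
        Finset.mem_singleton, φ, Function.Embedding.coeFn_mk]
      constructor
      · rintro ⟨u, rfl⟩; exact u.ne_zero
      · intro hx; exact ⟨Units.mk0 x hx, rfl⟩
    rw [← himg, Finset.sum_map]
    rfl
  rw [h1, h2]

theorem pow_sum (e : ℕ) :
    ∑ i ∈ Icc 1 (p - 1), (i : ZMod p) ^ e = if (p - 1) ∣ e then -1 else 0 := by
  classical
  have h := FiniteField.sum_pow_units (ZMod p) e
  rw [ZMod.card] at h
  calc ∑ i ∈ Icc 1 (p - 1), (i : ZMod p) ^ e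
      = ∑ x : (ZMod p)ˣ, ((x : ZMod p)) ^ e := sum_Icc_units p (fun x => x ^ e)
    _ = if (p - 1) ∣ e then -1 else 0 := h

theorem inv_eq_pow {x : ZMod p} (hx : x ≠ 0) : x⁻¹ = x ^ (p - 2) := by
  have h2 := hp.out.two_le
  have : x * x ^ (p - 2) = 1 := by
    have : x ^ (p - 1) = 1 := ZMod.pow_card_sub_one_eq_one hx
    calc x * x ^ (p - 2) = x ^ (p - 2 + 1) := by rw [pow_succ]; ring
    _ = x ^ (p - 1) := by congr 1; omega
    _ = 1 := this
  exact inv_eq_of_mul_eq_one_right this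

theorem inv_sum (a : ℕ) :
    ∑ i ∈ Icc 1 (p - 1), ((i : ZMod p)⁻¹) ^ a = if (p - 1) ∣ a then -1 else 0 := by
  have h2 := hp.out.two_le
  have step : ∑ i ∈ Icc 1 (p - 1), ((i : ZMod p)⁻¹) ^ a
      = ∑ i ∈ Icc 1 (p - 1), (i : ZMod p) ^ ((p - 2) * a) := by
    refine Finset.sum_congr rfl fun i hi => ?_
    simp only [mem_Icc] at hi
    rw [inv_eq_pow p (cast_ne_zero' p hi.1 hi.2), ← pow_mul]
  rw [step, pow_sum]
  by_cases hd : (p - 1) ∣ a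
  · have hd2 : (p - 1) ∣ (p - 2) * a := Dvd.dvd.mul_left hd _
    simp [hd, hd2]
  · have hd2 : ¬ (p - 1) ∣ (p - 2) * a := by
      intro hdd
      have hsub : (p - 1) * a - (p - 2) * a = a := by
        rw [← Nat.sub_mul]
        have : p - 1 - (p - 2) = 1 := by omega
        rw [this, one_mul]
      exact hd (hsub ▸ Nat.dvd_sub (dvd_mul_right _ _) hdd)
    simp [hd, hd2]

theorem gaussF (n : ℕ) :
    (2 : ZMod p) * ∑ i ∈ Icc 1 n, (i : ZMod p) = (n : ZMod p) * ((n : ZMod p) + 1) := by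
  have h := Finset.sum_range_id_mul_two (n + 1)
  have h2 : ∑ i ∈ range (n + 1), (i : ZMod p) = ∑ i ∈ Icc 1 n, (i : ZMod p) :=
    sum_range_to_Icc _ (by norm_num) n
  have h3 : ((∑ i ∈ range (n + 1), i : ℕ) : ZMod p) * 2 = (((n + 1) * n : ℕ) : ZMod p) := by
    exact_mod_cast congrArg (Nat.cast : ℕ → ZMod p) h
  push_cast at h3
  rw [h2] at h3
  linear_combination h3

variable (hp3 : 3 < p)
include hp3

theorem two_ne : (2 : ZMod p) ≠ 0 := by
  have : ((2 : ℕ) : ZMod p) ≠ 0 := cast_ne_zero' p (by norm_num) (by omega)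
  simpa using this

theorem three_ne : (3 : ZMod p) ≠ 0 := by
  have : ((3 : ℕ) : ZMod p) ≠ 0 := cast_ne_zero' p (by norm_num) (by omega)
  simpa using this

theorem four_ne : (4 : ZMod p) ≠ 0 := by
  have h2 := two_ne p hp3
  have : (4 : ZMod p) = 2 * 2 := by norm_num
  rw [this]; exact mul_ne_zero h2 h2

omit hp3

/-! ### Harmonic-type sums in `ZMod p` -/

def hh (n : ℕ) : ZMod p := ∑ i ∈ Icc 1 n, (i : ZMod p)⁻¹

def gg (n : ℕ) : ZMod p := ∑ i ∈ Icc 1 n, ((i : ZMod p)⁻¹) ^ 2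

def ss (n : ℕ) : ZMod p := ∑ j ∈ Icc 1 n, (j : ZMod p)⁻¹ * hh p (j - 1)

def aa : ZMod p := ∑ j ∈ Icc 1 (p - 1), ((j : ZMod p)⁻¹) ^ 2 * hh p (j - 1)

theorem hh_def (n : ℕ) : hh p n = ∑ i ∈ Icc 1 n, (i : ZMod p)⁻¹ := rfl
theorem gg_def (n : ℕ) : gg p n = ∑ i ∈ Icc 1 n, ((i : ZMod p)⁻¹) ^ 2 := rfl
theorem ss_def (n : ℕ) : ss p n = ∑ j ∈ Icc 1 n, (j : ZMod p)⁻¹ * hh p (j - 1) := rfl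
theorem aa_def : aa p = ∑ j ∈ Icc 1 (p - 1), ((j : ZMod p)⁻¹) ^ 2 * hh p (j - 1) := rfl

theorem hh_succ (n : ℕ) : hh p (n + 1) = hh p n + ((n + 1 : ℕ) : ZMod p)⁻¹ :=
  Finset.sum_Icc_succ_top (by omega) _

theorem gg_succ (n : ℕ) : gg p (n + 1) = gg p n + (((n + 1 : ℕ) : ZMod p)⁻¹) ^ 2 :=
  Finset.sum_Icc_succ_top (by omega) _

theorem ss_succ (n : ℕ) : ss p (n + 1) = ss p n + ((n + 1 : ℕ) : ZMod p)⁻¹ * hh p n := by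
  have h := Finset.sum_Icc_succ_top (by omega : 1 ≤ n + 1)
    (fun j => (j : ZMod p)⁻¹ * hh p (j - 1))
  simpa [ss_def] using h

theorem hh_pred {j : ℕ} (h : 1 ≤ j) : hh p j = hh p (j - 1) + (j : ZMod p)⁻¹ := by
  obtain ⟨j', rfl⟩ : ∃ j', j = j' + 1 := ⟨j - 1, by omega⟩
  simpa using hh_succ p j'

theorem sq_eq (n : ℕ) : hh p n ^ 2 = gg p n + 2 * ss p n := by
  induction n with
  | zero => simp [hh, gg, ss]
  | succ n ih => rw [hh_succ, gg_succ, ss_succ]; ring_nf; ring_nf at ih; linear_combination ih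

include hp3

theorem h_top : hh p (p - 1) = 0 := by
  have h := inv_sum p 1
  have hnd : ¬ (p - 1) ∣ 1 := by
    intro hd; have h1 := Nat.dvd_one.mp hd; omega
  simp only [pow_one] at h
  rw [hh_def, h, if_neg hnd]

theorem g_top : gg p (p - 1) = 0 := by
  have h := inv_sum p 2
  have hnd : ¬ (p - 1) ∣ 2 := by
    intro hd; have := Nat.le_of_dvd (by norm_num) hd; omega
  rw [gg_def, h, if_neg hnd]

theorem c3_top : ∑ i ∈ Icc 1 (p - 1), ((i : ZMod p)⁻¹) ^ 3 = 0 := by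
  have h := inv_sum p 3
  have hnd : ¬ (p - 1) ∣ 3 := by
    intro hd
    have h3 := Nat.le_of_dvd (by norm_num) hd
    have hne : p ≠ 4 := by intro h; rw [h] at hp; exact absurd hp.out (by norm_num)
    omega
  rw [h, if_neg hnd]

omit hp3 in
theorem one_top : ∑ _i ∈ Icc 1 (p - 1), (1 : ZMod p) = -1 := by
  rw [Finset.sum_const, Nat.card_Icc]
  simpa using castp1 p

theorem s_top : ss p (p - 1) = 0 := by
  have h := sq_eq p (p - 1)
  rw [h_top p hp3, g_top p hp3] at h
  have : (2 : ZMod p) * ss p (p - 1) = 2 * 0 := by linear_combination -h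
  exact mul_left_cancel₀ (two_ne p hp3) this

omit hp3

theorem L_Dn (n : ℕ) (hn : n ≤ p - 1) :
    ∑ j ∈ Icc 1 n, hh p (j - 1) = (n : ZMod p) * hh p n - n := by
  calc ∑ j ∈ Icc 1 n, hh p (j - 1)
      = ∑ j ∈ Icc 1 n, ∑ k ∈ Icc (j + 1) n, (j : ZMod p)⁻¹ :=
        swap_lt n (fun j _k => (j : ZMod p)⁻¹)
    _ = ∑ j ∈ Icc 1 n, ((n : ZMod p) * (j : ZMod p)⁻¹ - 1) := by
        refine Finset.sum_congr rfl fun j hj => ?_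
        simp only [mem_Icc] at hj
        rw [Finset.sum_const, Nat.card_Icc, nsmul_eq_mul]
        have he : n + 1 - (j + 1) = n - j := by omega
        rw [he, Nat.cast_sub hj.2, sub_mul,
          mul_inv_cancel₀ (cast_ne_zero' p hj.1 (le_trans hj.2 hn))]
    _ = (n : ZMod p) * hh p n - n := by
        rw [Finset.sum_sub_distrib, ← Finset.mul_sum, ← hh_def, Finset.sum_const,
          Nat.card_Icc, nsmul_eq_mul]
        simp

theorem L_D2 (n : ℕ) (hn : n ≤ p - 1) :
    (4 : ZMod p) * ∑ j ∈ Icc 1 n, (j : ZMod p) * hh p (j - 1)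
      = 2 * n * (n + 1) * hh p n - n * (n + 1) - 2 * n := by
  have hstep : ∑ j ∈ Icc 1 n, (j : ZMod p) * hh p (j - 1)
      = ∑ t ∈ Icc 1 n, ∑ j ∈ Icc (t + 1) n, (t : ZMod p)⁻¹ * (j : ZMod p) := by
    calc ∑ j ∈ Icc 1 n, (j : ZMod p) * hh p (j - 1)
        = ∑ j ∈ Icc 1 n, ∑ t ∈ Icc 1 (j - 1), (t : ZMod p)⁻¹ * (j : ZMod p) := by
          refine Finset.sum_congr rfl fun j _ => ?_
          rw [hh_def, Finset.mul_sum]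
          exact Finset.sum_congr rfl fun t _ => by ring
      _ = _ := swap_lt n _
  rw [hstep]
  have key : ∀ t ∈ Icc 1 n, (4 : ZMod p) * ∑ j ∈ Icc (t + 1) n, (t : ZMod p)⁻¹ * (j : ZMod p)
      = 2 * ((n : ZMod p) * (n + 1) * (t : ZMod p)⁻¹ - ((t : ZMod p) + 1)) := by
    intro t ht
    simp only [mem_Icc] at ht
    have htne : (t : ZMod p) ≠ 0 := cast_ne_zero' p ht.1 (le_trans ht.2 hn)
    have htail : ∑ j ∈ Icc (t + 1) n, (j : ZMod p)
        = ∑ j ∈ Icc 1 n, (j : ZMod p) - ∑ j ∈ Icc 1 t, (j : ZMod p) :=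
      sum_tail _ ht.2
    rw [← Finset.mul_sum]
    have hg1 := gaussF p n
    have hg2 := gaussF p t
    have hcan : (t : ZMod p)⁻¹ * (t : ZMod p) = 1 := inv_mul_cancel₀ htne
    calc (4 : ZMod p) * ((t : ZMod p)⁻¹ * ∑ j ∈ Icc (t + 1) n, (j : ZMod p))
        = (t : ZMod p)⁻¹ * (2 * ((2 : ZMod p) * ∑ j ∈ Icc 1 n, (j : ZMod p))
            - 2 * ((2 : ZMod p) * ∑ j ∈ Icc 1 t, (j : ZMod p))) := by
          rw [htail]; ring
      _ = (t : ZMod p)⁻¹ * (2 * ((n : ZMod p) * ((n : ZMod p) + 1))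
            - 2 * ((t : ZMod p) * ((t : ZMod p) + 1))) := by rw [hg1, hg2]
      _ = 2 * ((n : ZMod p) * (n + 1) * (t : ZMod p)⁻¹ - ((t : ZMod p) + 1)) := by
          field_simp
  calc (4 : ZMod p) * ∑ t ∈ Icc 1 n, ∑ j ∈ Icc (t + 1) n, (t : ZMod p)⁻¹ * (j : ZMod p)
      = ∑ t ∈ Icc 1 n, (4 : ZMod p) * ∑ j ∈ Icc (t + 1) n, (t : ZMod p)⁻¹ * (j : ZMod p) := by
        rw [Finset.mul_sum]
    _ = ∑ t ∈ Icc 1 n, 2 * ((n : ZMod p) * (n + 1) * (t : ZMod p)⁻¹ - ((t : ZMod p) + 1)) :=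
        Finset.sum_congr rfl key
    _ = 2 * ((n : ZMod p) * ((n : ZMod p) + 1) * hh p n)
          - 2 * (∑ t ∈ Icc 1 n, (t : ZMod p)) - 2 * n := by
        have hc : ∀ t ∈ Icc 1 n,
            (2 : ZMod p) * ((n : ZMod p) * (n + 1) * (t : ZMod p)⁻¹ - ((t : ZMod p) + 1))
              = 2 * (n : ZMod p) * ((n : ZMod p) + 1) * (t : ZMod p)⁻¹
                - 2 * (t : ZMod p) - 2 := fun t _ => by ring
        rw [Finset.sum_congr rfl hc]
        simp only [Finset.sum_sub_distrib, ← Finset.mul_sum, Finset.sum_const, Nat.card_Icc,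
          Nat.add_sub_cancel, nsmul_eq_mul, mul_one]
        rw [hh_def]
        ring
    _ = 2 * n * (n + 1) * hh p n - n * (n + 1) - 2 * n := by
        linear_combination (-1 : ZMod p) * (gaussF p n)

theorem L_D2' (n : ℕ) (hn : n ≤ p - 1) :
    (2 : ZMod p) * ∑ k ∈ Icc 1 n, (k : ZMod p) * gg p k
      = (n : ZMod p) * (n + 1) * gg p n - n + hh p n := by
  have hstep : ∑ k ∈ Icc 1 n, (k : ZMod p) * gg p k
      = ∑ l ∈ Icc 1 n, ∑ k ∈ Icc l n, ((l : ZMod p)⁻¹) ^ 2 * (k : ZMod p) := by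
    calc ∑ k ∈ Icc 1 n, (k : ZMod p) * gg p k
        = ∑ k ∈ Icc 1 n, ∑ l ∈ Icc 1 k, ((l : ZMod p)⁻¹) ^ 2 * (k : ZMod p) := by
          refine Finset.sum_congr rfl fun k _ => ?_
          rw [gg_def, Finset.mul_sum]
          exact Finset.sum_congr rfl fun l _ => by ring
      _ = _ := swap_le n _
  rw [hstep]
  have key : ∀ l ∈ Icc 1 n, (2 : ZMod p) * ∑ k ∈ Icc l n, ((l : ZMod p)⁻¹) ^ 2 * (k : ZMod p)
      = (n : ZMod p) * (n + 1) * ((l : ZMod p)⁻¹) ^ 2 - 1 + (l : ZMod p)⁻¹ := by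
    intro l hl
    simp only [mem_Icc] at hl
    have hlne : (l : ZMod p) ≠ 0 := cast_ne_zero' p hl.1 (le_trans hl.2 hn)
    have hl1 : l = (l - 1) + 1 := by omega
    have htail : ∑ k ∈ Icc l n, (k : ZMod p)
        = ∑ k ∈ Icc 1 n, (k : ZMod p) - ∑ k ∈ Icc 1 (l - 1), (k : ZMod p) := by
      rw [hl1]; exact sum_tail _ (by omega)
    have hcast : ((l - 1 : ℕ) : ZMod p) = (l : ZMod p) - 1 := by
      rw [Nat.cast_sub hl.1]; simp
    have hg1 := gaussF p n
    have hg2 := gaussF p (l - 1)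
    rw [hcast] at hg2
    rw [← Finset.mul_sum]
    have hcan : (l : ZMod p)⁻¹ * (l : ZMod p) = 1 := inv_mul_cancel₀ hlne
    calc (2 : ZMod p) * (((l : ZMod p)⁻¹) ^ 2 * ∑ k ∈ Icc l n, (k : ZMod p))
        = ((l : ZMod p)⁻¹) ^ 2 * ((2 : ZMod p) * ∑ k ∈ Icc 1 n, (k : ZMod p)
            - (2 : ZMod p) * ∑ k ∈ Icc 1 (l - 1), (k : ZMod p)) := by
          rw [htail]; ring
      _ = ((l : ZMod p)⁻¹) ^ 2 * ((n : ZMod p) * ((n : ZMod p) + 1)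
            - ((l : ZMod p) - 1) * ((l : ZMod p) - 1 + 1)) := by rw [hg1, hg2]
      _ = (n : ZMod p) * (n + 1) * ((l : ZMod p)⁻¹) ^ 2 - 1 + (l : ZMod p)⁻¹ := by
          field_simp
          ring
  calc (2 : ZMod p) * ∑ l ∈ Icc 1 n, ∑ k ∈ Icc l n, ((l : ZMod p)⁻¹) ^ 2 * (k : ZMod p)
      = ∑ l ∈ Icc 1 n, (2 : ZMod p) * ∑ k ∈ Icc l n, ((l : ZMod p)⁻¹) ^ 2 * (k : ZMod p) := by
        rw [Finset.mul_sum]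
    _ = ∑ l ∈ Icc 1 n, ((n : ZMod p) * (n + 1) * ((l : ZMod p)⁻¹) ^ 2 - 1 + (l : ZMod p)⁻¹) :=
        Finset.sum_congr rfl key
    _ = (n : ZMod p) * (n + 1) * gg p n - n + hh p n := by
        simp only [Finset.sum_add_distrib, Finset.sum_sub_distrib, ← Finset.mul_sum,
          Finset.sum_const, Nat.card_Icc, Nat.add_sub_cancel, nsmul_eq_mul, mul_one]
        rw [gg_def, hh_def]

include hp3

theorem E1 : ∑ j ∈ Icc 1 (p - 1), hh p (j - 1) = 1 := by
  rw [L_Dn p (p - 1) le_rfl, castp1, h_top p hp3]; ring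

theorem E1' : ∑ j ∈ Icc 1 (p - 1), hh p j = 1 := by
  have hc : ∀ j ∈ Icc 1 (p - 1), hh p j = hh p (j - 1) + (j : ZMod p)⁻¹ := fun j hj => by
    simp only [mem_Icc] at hj; exact hh_pred p hj.1
  rw [Finset.sum_congr rfl hc, Finset.sum_add_distrib, E1 p hp3, ← hh_def, h_top p hp3]
  ring

theorem sumjinvhj : ∑ j ∈ Icc 1 (p - 1), (j : ZMod p)⁻¹ * hh p j = 0 := by
  have hc : ∀ j ∈ Icc 1 (p - 1), (j : ZMod p)⁻¹ * hh p j
      = (j : ZMod p)⁻¹ * hh p (j - 1) + ((j : ZMod p)⁻¹) ^ 2 := fun j hj => by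
    simp only [mem_Icc] at hj; rw [hh_pred p hj.1]; ring
  rw [Finset.sum_congr rfl hc, Finset.sum_add_distrib, ← ss_def, ← gg_def, s_top p hp3,
    g_top p hp3, add_zero]

theorem bb_eq :
    ∑ j ∈ Icc 1 (p - 1), (j : ZMod p)⁻¹ * gg p (j - 1) = -(aa p) := by
  calc ∑ j ∈ Icc 1 (p - 1), (j : ZMod p)⁻¹ * gg p (j - 1)
      = ∑ j ∈ Icc 1 (p - 1), ∑ l ∈ Icc 1 (j - 1), ((l : ZMod p)⁻¹) ^ 2 * (j : ZMod p)⁻¹ := by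
        refine Finset.sum_congr rfl fun j _ => ?_
        rw [gg_def, Finset.mul_sum]
        exact Finset.sum_congr rfl fun l _ => by ring
    _ = ∑ l ∈ Icc 1 (p - 1), ∑ j ∈ Icc (l + 1) (p - 1), ((l : ZMod p)⁻¹) ^ 2 * (j : ZMod p)⁻¹ :=
        swap_lt _ _
    _ = ∑ l ∈ Icc 1 (p - 1), ((l : ZMod p)⁻¹) ^ 2 * (hh p (p - 1) - hh p l) := by
        refine Finset.sum_congr rfl fun l hl => ?_
        simp only [mem_Icc] at hl
        rw [← Finset.mul_sum, sum_tail _ hl.2, ← hh_def, ← hh_def]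
    _ = -(aa p) := by
        have hc : ∀ l ∈ Icc 1 (p - 1), ((l : ZMod p)⁻¹) ^ 2 * (hh p (p - 1) - hh p l)
            = -(((l : ZMod p)⁻¹) ^ 2 * hh p (l - 1)) - ((l : ZMod p)⁻¹) ^ 3 := by
          intro l hl
          simp only [mem_Icc] at hl
          rw [h_top p hp3, hh_pred p hl.1]
          ring
        rw [Finset.sum_congr rfl hc, Finset.sum_sub_distrib, Finset.sum_neg_distrib,
          ← aa_def, c3_top p hp3, sub_zero]

theorem E4_eq :
    ∑ j ∈ Icc 1 (p - 1), (j : ZMod p)⁻¹ * hh p (j - 1) ^ 2 = -(aa p) := by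
  set E4 := ∑ j ∈ Icc 1 (p - 1), (j : ZMod p)⁻¹ * hh p (j - 1) ^ 2 with hE4
  set S5 := ∑ j ∈ Icc 1 (p - 1), (j : ZMod p)⁻¹ * ss p (j - 1) with hS5
  have h1 : S5 = -E4 - aa p := by
    have hstep : S5 = ∑ l ∈ Icc 1 (p - 1),
        ((l : ZMod p)⁻¹ * hh p (l - 1)) * (hh p (p - 1) - hh p l) := by
      calc S5 = ∑ j ∈ Icc 1 (p - 1), ∑ l ∈ Icc 1 (j - 1),
            ((l : ZMod p)⁻¹ * hh p (l - 1)) * (j : ZMod p)⁻¹ := by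
            rw [hS5]
            refine Finset.sum_congr rfl fun j _ => ?_
            rw [ss_def, Finset.mul_sum]
            exact Finset.sum_congr rfl fun l _ => by ring
        _ = ∑ l ∈ Icc 1 (p - 1), ∑ j ∈ Icc (l + 1) (p - 1),
            ((l : ZMod p)⁻¹ * hh p (l - 1)) * (j : ZMod p)⁻¹ := swap_lt _ _
        _ = _ := by
            refine Finset.sum_congr rfl fun l hl => ?_
            simp only [mem_Icc] at hl
            rw [← Finset.mul_sum, sum_tail _ hl.2, ← hh_def, ← hh_def]
    rw [hstep]
    have hc : ∀ l ∈ Icc 1 (p - 1), ((l : ZMod p)⁻¹ * hh p (l - 1)) * (hh p (p - 1) - hh p l)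
        = -((l : ZMod p)⁻¹ * hh p (l - 1) ^ 2) - ((l : ZMod p)⁻¹) ^ 2 * hh p (l - 1) := by
      intro l hl; simp only [mem_Icc] at hl
      rw [h_top p hp3, hh_pred p hl.1]; ring
    rw [Finset.sum_congr rfl hc, Finset.sum_sub_distrib, Finset.sum_neg_distrib, ← hE4, ← aa_def]
  have h2 : E4 = -(aa p) + 2 * S5 := by
    have hc : ∀ j ∈ Icc 1 (p - 1), (j : ZMod p)⁻¹ * hh p (j - 1) ^ 2
        = (j : ZMod p)⁻¹ * gg p (j - 1) + 2 * ((j : ZMod p)⁻¹ * ss p (j - 1)) := by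
      intro j _
      rw [sq_eq]; ring
    rw [hE4, Finset.sum_congr rfl hc, Finset.sum_add_distrib, bb_eq p hp3, ← Finset.mul_sum,
      ← hS5]
  have h3 : (3 : ZMod p) * E4 = 3 * (-(aa p)) := by linear_combination h2 + 2 * h1
  exact mul_left_cancel₀ (three_ne p hp3) h3

theorem E2_eq :
    ∑ j ∈ Icc 1 (p - 1), hh p (j - 1) * gg p (j - 1) = 0 := by
  calc ∑ j ∈ Icc 1 (p - 1), hh p (j - 1) * gg p (j - 1)
      = ∑ j ∈ Icc 1 (p - 1), ∑ l ∈ Icc 1 (j - 1), ((l : ZMod p)⁻¹) ^ 2 * hh p (j - 1) := by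
        refine Finset.sum_congr rfl fun j _ => ?_
        rw [gg_def, Finset.mul_sum]
        exact Finset.sum_congr rfl fun l _ => by ring
    _ = ∑ l ∈ Icc 1 (p - 1), ∑ j ∈ Icc (l + 1) (p - 1), ((l : ZMod p)⁻¹) ^ 2 * hh p (j - 1) :=
        swap_lt _ _
    _ = ∑ l ∈ Icc 1 (p - 1), ((l : ZMod p)⁻¹) ^ 2 * (1 - ((l : ZMod p) * hh p l - l)) := by
        refine Finset.sum_congr rfl fun l hl => ?_
        simp only [mem_Icc] at hl
        rw [← Finset.mul_sum, sum_tail _ hl.2, E1 p hp3, L_Dn p l hl.2]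
    _ = 0 := by
        have hc : ∀ l ∈ Icc 1 (p - 1), ((l : ZMod p)⁻¹) ^ 2 * (1 - ((l : ZMod p) * hh p l - l))
            = ((l : ZMod p)⁻¹) ^ 2 + (l : ZMod p)⁻¹ - (l : ZMod p)⁻¹ * hh p l := by
          intro l hl; simp only [mem_Icc] at hl
          have hlne : (l : ZMod p) ≠ 0 := cast_ne_zero' p hl.1 hl.2
          field_simp
          ring
        rw [Finset.sum_congr rfl hc, Finset.sum_sub_distrib, Finset.sum_add_distrib,
          ← gg_def, ← hh_def, g_top p hp3, h_top p hp3, sumjinvhj p hp3]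
        norm_num

theorem E3_eq :
    (4 : ZMod p) * ∑ j ∈ Icc 1 (p - 1), (j : ZMod p) * (hh p (j - 1) * gg p (j - 1)) = -3 := by
  have hstep : ∑ j ∈ Icc 1 (p - 1), (j : ZMod p) * (hh p (j - 1) * gg p (j - 1))
      = ∑ l ∈ Icc 1 (p - 1), ∑ j ∈ Icc (l + 1) (p - 1),
          ((l : ZMod p)⁻¹) ^ 2 * ((j : ZMod p) * hh p (j - 1)) := by
    calc ∑ j ∈ Icc 1 (p - 1), (j : ZMod p) * (hh p (j - 1) * gg p (j - 1))
        = ∑ j ∈ Icc 1 (p - 1), ∑ l ∈ Icc 1 (j - 1),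
            ((l : ZMod p)⁻¹) ^ 2 * ((j : ZMod p) * hh p (j - 1)) := by
          refine Finset.sum_congr rfl fun j _ => ?_
          rw [gg_def, Finset.mul_sum, Finset.mul_sum]
          exact Finset.sum_congr rfl fun l _ => by ring
      _ = _ := swap_lt _ _
  rw [hstep]
  have hDtop : (4 : ZMod p) * ∑ j ∈ Icc 1 (p - 1), (j : ZMod p) * hh p (j - 1) = 2 := by
    rw [L_D2 p (p - 1) le_rfl, castp1, h_top p hp3]
    ring
  have key : ∀ l ∈ Icc 1 (p - 1), (4 : ZMod p) * ∑ j ∈ Icc (l + 1) (p - 1),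
        ((l : ZMod p)⁻¹) ^ 2 * ((j : ZMod p) * hh p (j - 1))
      = 2 * ((l : ZMod p)⁻¹) ^ 2 - 2 * hh p l - 2 * ((l : ZMod p)⁻¹ * hh p l)
          + 1 + 3 * (l : ZMod p)⁻¹ := by
    intro l hl
    simp only [mem_Icc] at hl
    have hlne : (l : ZMod p) ≠ 0 := cast_ne_zero' p hl.1 hl.2
    have hcan : (l : ZMod p) * (l : ZMod p)⁻¹ = 1 := mul_inv_cancel₀ hlne
    have hx2 : ((l : ZMod p)⁻¹) ^ 2 * ((l : ZMod p) * ((l : ZMod p) + 1))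
        = 1 + (l : ZMod p)⁻¹ := by field_simp
    have hx1 : ((l : ZMod p)⁻¹) ^ 2 * (l : ZMod p) = (l : ZMod p)⁻¹ := by field_simp
    have h2 := L_D2 p l hl.2
    rw [← Finset.mul_sum, sum_tail _ hl.2]
    linear_combination (((l : ZMod p)⁻¹) ^ 2) * hDtop - (((l : ZMod p)⁻¹) ^ 2) * h2
      + (1 - 2 * hh p l) * hx2 + 2 * hx1
  calc (4 : ZMod p) * ∑ l ∈ Icc 1 (p - 1), ∑ j ∈ Icc (l + 1) (p - 1),
        ((l : ZMod p)⁻¹) ^ 2 * ((j : ZMod p) * hh p (j - 1))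
      = ∑ l ∈ Icc 1 (p - 1), (4 : ZMod p) * ∑ j ∈ Icc (l + 1) (p - 1),
          ((l : ZMod p)⁻¹) ^ 2 * ((j : ZMod p) * hh p (j - 1)) := by rw [Finset.mul_sum]
    _ = ∑ l ∈ Icc 1 (p - 1), (2 * ((l : ZMod p)⁻¹) ^ 2 - 2 * hh p l
          - 2 * ((l : ZMod p)⁻¹ * hh p l) + 1 + 3 * (l : ZMod p)⁻¹) :=
        Finset.sum_congr rfl key
    _ = -3 := by
        simp only [Finset.sum_add_distrib, Finset.sum_sub_distrib, ← Finset.mul_sum,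
          Finset.sum_const, Nat.card_Icc, Nat.add_sub_cancel, nsmul_eq_mul, mul_one]
        rw [← gg_def, ← hh_def, g_top p hp3, h_top p hp3, E1' p hp3, sumjinvhj p hp3, castp1]
        ring

theorem core_eq :
    (8 : ZMod p) * ∑ k ∈ Icc 1 (p - 1), (k : ZMod p) * (gg p k * ss p k)
      = 7 + 4 * aa p := by
  have hstep : ∑ k ∈ Icc 1 (p - 1), (k : ZMod p) * (gg p k * ss p k)
      = ∑ j ∈ Icc 1 (p - 1), ∑ k ∈ Icc j (p - 1),
          ((j : ZMod p)⁻¹ * hh p (j - 1)) * ((k : ZMod p) * gg p k) := by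
    calc ∑ k ∈ Icc 1 (p - 1), (k : ZMod p) * (gg p k * ss p k)
        = ∑ k ∈ Icc 1 (p - 1), ∑ j ∈ Icc 1 k,
            ((j : ZMod p)⁻¹ * hh p (j - 1)) * ((k : ZMod p) * gg p k) := by
          refine Finset.sum_congr rfl fun k _ => ?_
          rw [ss_def, Finset.mul_sum, Finset.mul_sum]
          exact Finset.sum_congr rfl fun j _ => by ring
      _ = _ := swap_le _ _
  have hD2t : (2 : ZMod p) * ∑ k ∈ Icc 1 (p - 1), (k : ZMod p) * gg p k = 1 := by
    rw [L_D2' p (p - 1) le_rfl, castp1, g_top p hp3, h_top p hp3]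
    ring
  have key : ∀ j ∈ Icc 1 (p - 1), (2 : ZMod p) * ∑ k ∈ Icc j (p - 1),
        ((j : ZMod p)⁻¹ * hh p (j - 1)) * ((k : ZMod p) * gg p k)
      = hh p (j - 1) - ((j : ZMod p) - 1) * (hh p (j - 1) * gg p (j - 1))
          - (j : ZMod p)⁻¹ * hh p (j - 1) ^ 2 := by
    intro j hj
    simp only [mem_Icc] at hj
    have hjne : (j : ZMod p) ≠ 0 := cast_ne_zero' p hj.1 hj.2
    have hcanj : (j : ZMod p) * (j : ZMod p)⁻¹ = 1 := mul_inv_cancel₀ hjne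
    have hD2j := L_D2' p (j - 1) (by omega)
    have hcast : ((j - 1 : ℕ) : ZMod p) = (j : ZMod p) - 1 := by
      rw [Nat.cast_sub hj.1]; simp
    rw [hcast] at hD2j
    have hidx : Icc j (p - 1) = Icc ((j - 1) + 1) (p - 1) := by congr 1; omega
    rw [hidx, ← Finset.mul_sum, sum_tail _ (by omega : j - 1 ≤ p - 1)]
    linear_combination ((j : ZMod p)⁻¹ * hh p (j - 1)) * hD2t
      - ((j : ZMod p)⁻¹ * hh p (j - 1)) * hD2j
      + (hh p (j - 1) - hh p (j - 1) * gg p (j - 1) * ((j : ZMod p) - 1)) * hcanj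
  have h2core : (2 : ZMod p) * ∑ k ∈ Icc 1 (p - 1), (k : ZMod p) * (gg p k * ss p k)
      = (∑ j ∈ Icc 1 (p - 1), hh p (j - 1))
        - ((∑ j ∈ Icc 1 (p - 1), (j : ZMod p) * (hh p (j - 1) * gg p (j - 1)))
            - ∑ j ∈ Icc 1 (p - 1), hh p (j - 1) * gg p (j - 1))
        - ∑ j ∈ Icc 1 (p - 1), (j : ZMod p)⁻¹ * hh p (j - 1) ^ 2 := by
    rw [hstep, Finset.mul_sum, Finset.sum_congr rfl key]
    rw [Finset.sum_sub_distrib, Finset.sum_sub_distrib]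
    congr 1
    congr 1
    rw [← Finset.sum_sub_distrib]
    exact Finset.sum_congr rfl fun j _ => by ring
  linear_combination (4 : ZMod p) * h2core + 4 * (E1 p hp3) - (E3_eq p hp3)
    + 4 * (E2_eq p hp3) - 4 * (E4_eq p hp3)

/-! ### Bernoulli numbers mod `p` -/

omit hp3 hp

theorem norm_sum_le_one {ι : Type*} [hp : Fact p.Prime] (s : Finset ι) (f : ι → ℚ_[p])
    (h : ∀ i ∈ s, ‖f i‖ ≤ 1) : ‖∑ i ∈ s, f i‖ ≤ 1 := by
  classical
  induction s using Finset.cons_induction with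
  | empty => simp
  | cons a s ha ih =>
    rw [Finset.sum_cons]
    refine le_trans (Padic.nonarchimedean _ _) ?_
    refine max_le (h a (Finset.mem_cons_self a s)) (ih fun i hi => h i (Finset.mem_cons.2 (Or.inr hi)))

variable [hp : Fact p.Prime]

theorem den_lemma (q : ℚ) (h : ‖((q : ℚ) : ℚ_[p])‖ ≤ 1) : ¬ p ∣ q.den := by
  intro hd
  have hnum : ¬ (p : ℤ) ∣ q.num := by
    intro hn
    have h1 : p ∣ q.num.natAbs := by
      have := Int.natAbs_dvd_natAbs.mpr hn
      simpa using this
    have h2 : p ∣ Nat.gcd q.num.natAbs q.den := Nat.dvd_gcd h1 hd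
    rw [q.reduced] at h2
    exact hp.out.one_lt.ne' (Nat.dvd_one.mp h2)
  have hden0 : ((q.den : ℚ)) ≠ 0 := Nat.cast_ne_zero.mpr q.den_nz
  have heq : (q : ℚ_[p]) * ((q.den : ℕ) : ℚ_[p]) = ((q.num : ℤ) : ℚ_[p]) := by
    have h0 : (q : ℚ) * ((q.den : ℕ) : ℚ) = ((q.num : ℤ) : ℚ) := Rat.mul_den_eq_num q
    exact_mod_cast congrArg (fun x : ℚ => (x : ℚ_[p])) h0
  have hn1 : ‖((q.num : ℤ) : ℚ_[p])‖ = 1 := by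
    rcases lt_or_eq_of_le (Padic.norm_int_le_one (p := p) q.num) with h' | h'
    · exact absurd (Padic.norm_intCast_lt_one_iff.mp h') hnum
    · exact h'
  have hd1 : ‖((q.den : ℕ) : ℚ_[p])‖ < 1 := by
    have : ‖(((q.den : ℕ) : ℤ) : ℚ_[p])‖ < 1 :=
      Padic.norm_intCast_lt_one_iff.mpr (by exact_mod_cast hd)
    simpa using this
  rw [← heq, norm_mul] at hn1
  have hnn : (0 : ℝ) ≤ ‖((q.den : ℕ) : ℚ_[p])‖ := norm_nonneg _
  nlinarith

include hp3

theorem bern_norm_le (n : ℕ) (hn : n < p - 1) : ‖((bernoulli n : ℚ) : ℚ_[p])‖ ≤ 1 := by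
  induction n using Nat.strong_induction_on with
  | _ n ih =>
    rcases Nat.eq_zero_or_pos n with rfl | hn0
    · simp
    · have hkey := sum_bernoulli (n + 1)
      rw [if_neg (by omega : n + 1 ≠ 1), Finset.sum_range_succ,
        Nat.choose_succ_self_right] at hkey
      have hb : (bernoulli n : ℚ)
          = -(∑ k ∈ Finset.range n, ((n + 1).choose k : ℚ) * bernoulli k)
              / ((n : ℚ) + 1) := by
        have hne : ((n : ℚ) + 1) ≠ 0 := by positivity
        rw [eq_div_iff hne]
        push_cast at hkey
        linear_combination hkey
      have hnorm1 : ‖((n : ℚ_[p]) + 1)‖ = 1 := by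
        have hcast : ((n : ℚ_[p]) + 1) = (((n + 1 : ℕ) : ℤ) : ℚ_[p]) := by push_cast; ring
        rw [hcast]
        rcases lt_or_eq_of_le (Padic.norm_int_le_one (p := p) ((n + 1 : ℕ) : ℤ)) with h' | h'
        · exfalso
          have hdd := Padic.norm_intCast_lt_one_iff.mp h'
          have : (p : ℤ) ≤ ((n + 1 : ℕ) : ℤ) := Int.le_of_dvd (by positivity) hdd
          have hple := hp.out.two_le
          omega
        · exact h'
      have hsum : ‖((∑ k ∈ Finset.range n, ((n + 1).choose k : ℚ) * bernoulli k : ℚ) : ℚ_[p])‖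
          ≤ 1 := by
        rw [Rat.cast_sum]
        apply norm_sum_le_one
        intro k hk
        rw [Rat.cast_mul, norm_mul]
        have hC : ‖(((n + 1).choose k : ℚ) : ℚ_[p])‖ ≤ 1 := by
          have : ((((n + 1).choose k : ℕ) : ℚ) : ℚ_[p]) = ((((n + 1).choose k : ℕ) : ℤ) : ℚ_[p]) := by
            push_cast; ring
          rw [this]
          exact Padic.norm_int_le_one _
        have hB : ‖((bernoulli k : ℚ) : ℚ_[p])‖ ≤ 1 := by
          have hkn := Finset.mem_range.mp hk
          exact ih k hkn (by omega)
        calc ‖(((n + 1).choose k : ℚ) : ℚ_[p])‖ * ‖((bernoulli k : ℚ) : ℚ_[p])‖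
            ≤ 1 * 1 := mul_le_mul hC hB (norm_nonneg _) (by norm_num)
          _ = 1 := by norm_num
      rw [hb]
      rw [Rat.cast_div, Rat.cast_neg]
      rw [norm_div, norm_neg]
      have hden : ‖((((n : ℚ) + 1) : ℚ) : ℚ_[p])‖ = 1 := by
        have : ((((n : ℚ) + 1) : ℚ) : ℚ_[p]) = ((n : ℚ_[p]) + 1) := by push_cast; ring
        rw [this, hnorm1]
      rw [hden]
      simpa using hsum

theorem bern_den_not_dvd (n : ℕ) (hn : n < p - 1) : ¬ p ∣ (bernoulli n).den :=
  den_lemma p _ (bern_norm_le p hp3 n hn)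

omit hp3

/-- the image of `bernoulli i` in `ZMod p` -/
noncomputable def bB (i : ℕ) : ZMod p :=
  ((bernoulli i).num : ZMod p) * ((bernoulli i).den : ZMod p)⁻¹

theorem bB_def (i : ℕ) :
    bB p i = ((bernoulli i).num : ZMod p) * ((bernoulli i).den : ZMod p)⁻¹ := rfl

/-- common denominator of the Bernoulli numbers below `p - 1` -/
def Dall : ℕ := ∏ i ∈ range (p - 1), (bernoulli i).den

/-- cofactor of the `i`-th Bernoulli denominator in `Dall` -/
def XD (i : ℕ) : ℕ := Dall p / (bernoulli i).den

include hp3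

theorem p_not_dvd_Dall : ¬ p ∣ Dall p := by
  intro hd
  obtain ⟨i, hi, hdvd⟩ := (Prime.dvd_finset_prod_iff hp.out.prime _).mp hd
  exact bern_den_not_dvd p hp3 i (mem_range.mp hi) hdvd

theorem bern_den_ne (i : ℕ) (hi : i < p - 1) : ((bernoulli i).den : ZMod p) ≠ 0 := by
  intro h0
  rw [ZMod.natCast_eq_zero_iff] at h0
  exact bern_den_not_dvd p hp3 i hi h0

theorem FAU (j : ℕ) :
    ∑ k ∈ range j, (k : ZMod p) ^ (p - 2)
      = -∑ i ∈ range (p - 1), bB p i * ((p - 1).choose i : ZMod p) * (j : ZMod p) ^ (p - 1 - i) := by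
  have h2 := hp.out.two_le
  have hN : p - 2 + 1 = p - 1 := by omega
  have hQ := sum_range_pow j (p - 2)
  rw [hN] at hQ
  have hQ2 : (Dall p : ℚ) * (((p - 2 : ℕ) : ℚ) + 1) * ∑ k ∈ range j, (k : ℚ) ^ (p - 2)
      = ∑ i ∈ range (p - 1), ((bernoulli i).num : ℚ)
          * (XD p i : ℚ) * ((p - 1).choose i : ℚ)
          * (j : ℚ) ^ (p - 1 - i) := by
    rw [hQ, Finset.mul_sum]
    refine Finset.sum_congr rfl fun i hi => ?_
    have hdvd : (bernoulli i).den ∣ Dall p := dvd_prod_of_mem _ hi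
    have hXden : ((XD p i : ℕ) : ℚ) * ((bernoulli i).den : ℚ) = (Dall p : ℚ) := by
      exact_mod_cast congrArg (Nat.cast : ℕ → ℚ) (Nat.div_mul_cancel hdvd)
    have hbd := Rat.mul_den_eq_num (bernoulli i)
    have hq1 : ((p - 2 : ℕ) : ℚ) + 1 ≠ 0 := by positivity
    have hinv : (((p - 2 : ℕ) : ℚ) + 1) * (((p - 2 : ℕ) : ℚ) + 1)⁻¹ = 1 := mul_inv_cancel₀ hq1
    rw [div_eq_mul_inv]
    linear_combination ((Dall p : ℚ) * bernoulli i * ((p - 1).choose i : ℚ)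
        * (j : ℚ) ^ (p - 1 - i)) * hinv
      + (((XD p i : ℕ) : ℚ) * ((p - 1).choose i : ℚ) * (j : ℚ) ^ (p - 1 - i)) * hbd
      - ((bernoulli i) * ((p - 1).choose i : ℚ) * (j : ℚ) ^ (p - 1 - i)) * hXden
  have hcast : ((p - 2 : ℕ) : ℚ) + 1 = ((p - 1 : ℕ) : ℚ) := by exact_mod_cast hN
  rw [hcast] at hQ2
  have hInt2 : ((Dall p * (p - 1) * ∑ k ∈ range j, k ^ (p - 2) : ℕ) : ℤ)
      = ∑ i ∈ range (p - 1), (bernoulli i).num * (XD p i : ℤ)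
          * (((p - 1).choose i : ℕ) : ℤ) * (j : ℤ) ^ (p - 1 - i) := by
    exact_mod_cast hQ2
  have hZ : ((Dall p * (p - 1) * ∑ k ∈ range j, k ^ (p - 2) : ℕ) : ZMod p)
      = ((∑ i ∈ range (p - 1), (bernoulli i).num * (XD p i : ℤ)
          * (((p - 1).choose i : ℕ) : ℤ) * (j : ℤ) ^ (p - 1 - i) : ℤ) : ZMod p) := by
    rw [← Int.cast_natCast]
    exact congrArg (Int.cast : ℤ → ZMod p) hInt2
  push_cast at hZ
  rw [castp1 p] at hZ
  have hDne : (Dall p : ZMod p) ≠ 0 := by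
    intro h0; rw [ZMod.natCast_eq_zero_iff] at h0; exact p_not_dvd_Dall p hp3 h0
  have hR : ∑ i ∈ range (p - 1), ((bernoulli i).num : ZMod p)
        * ((XD p i : ℕ) : ZMod p) * (((p - 1).choose i : ℕ) : ZMod p)
        * (j : ZMod p) ^ (p - 1 - i)
      = (Dall p : ZMod p) * ∑ i ∈ range (p - 1),
          bB p i * ((p - 1).choose i : ZMod p) * (j : ZMod p) ^ (p - 1 - i) := by
    rw [Finset.mul_sum]
    refine Finset.sum_congr rfl fun i hi => ?_
    have hdvd : (bernoulli i).den ∣ Dall p := dvd_prod_of_mem _ hi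
    have hden_ne : ((bernoulli i).den : ZMod p) ≠ 0 := bern_den_ne p hp3 i (mem_range.mp hi)
    have hcancel : ((bernoulli i).den : ZMod p) * ((bernoulli i).den : ZMod p)⁻¹ = 1 :=
      mul_inv_cancel₀ hden_ne
    have hXden : ((XD p i : ℕ) : ZMod p) * ((bernoulli i).den : ZMod p)
        = (Dall p : ZMod p) := by
      exact_mod_cast congrArg (Nat.cast : ℕ → ZMod p) (Nat.div_mul_cancel hdvd)
    rw [bB_def]
    linear_combination (-(((bernoulli i).num : ZMod p) * (((p - 1).choose i : ℕ) : ZMod p)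
        * (j : ZMod p) ^ (p - 1 - i) * ((XD p i : ℕ) : ZMod p))) * hcancel
      + (((bernoulli i).num : ZMod p) * ((bernoulli i).den : ZMod p)⁻¹
        * (((p - 1).choose i : ℕ) : ZMod p) * (j : ZMod p) ^ (p - 1 - i)) * hXden
  rw [hR] at hZ
  have hfin : (Dall p : ZMod p) * (∑ k ∈ range j, (k : ZMod p) ^ (p - 2))
      = (Dall p : ZMod p) * (-∑ i ∈ range (p - 1),
          bB p i * ((p - 1).choose i : ZMod p) * (j : ZMod p) ^ (p - 1 - i)) := by
    linear_combination (-1 : ZMod p) * hZ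
  exact mul_left_cancel₀ hDne hfin

theorem hh_eq_Sf (j : ℕ) (h1 : 1 ≤ j) (h2 : j ≤ p - 1) :
    hh p (j - 1) = ∑ k ∈ range j, (k : ZMod p) ^ (p - 2) := by
  have hple := hp.out.two_le
  obtain ⟨j', rfl⟩ : ∃ j', j = j' + 1 := ⟨j - 1, by omega⟩
  rw [sum_range_to_Icc (fun k => (k : ZMod p) ^ (p - 2))
    (by show ((0 : ℕ) : ZMod p) ^ (p - 2) = 0
        rw [Nat.cast_zero]; exact zero_pow (by omega)) j']
  simp only [Nat.add_sub_cancel]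
  rw [hh_def]
  refine Finset.sum_congr rfl fun i hi => ?_
  simp only [mem_Icc] at hi
  exact inv_eq_pow p (cast_ne_zero' p hi.1 (by omega))

theorem aa_eq : aa p = bB p (p - 3) := by
  have h2 := hp.out.two_le
  rw [aa_def]
  have hstep : ∀ j ∈ Icc 1 (p - 1), ((j : ZMod p)⁻¹) ^ 2 * hh p (j - 1)
      = -∑ i ∈ range (p - 1), bB p i * ((p - 1).choose i : ZMod p)
          * (((j : ZMod p)⁻¹) ^ 2 * (j : ZMod p) ^ (p - 1 - i)) := by
    intro j hj; simp only [mem_Icc] at hj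
    rw [hh_eq_Sf p hp3 j hj.1 hj.2, FAU p hp3 j, mul_neg, Finset.mul_sum]
    congr 1
    exact Finset.sum_congr rfl fun i _ => by ring
  rw [Finset.sum_congr rfl hstep, Finset.sum_neg_distrib, Finset.sum_comm]
  have hin : ∀ i ∈ range (p - 1), ∑ j ∈ Icc 1 (p - 1), bB p i
        * ((p - 1).choose i : ZMod p) * (((j : ZMod p)⁻¹) ^ 2 * (j : ZMod p) ^ (p - 1 - i))
      = bB p i * ((p - 1).choose i : ZMod p)
          * (if (p - 1) ∣ ((p - 2) * 2 + (p - 1 - i)) then -1 else 0) := by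
    intro i _
    rw [← Finset.mul_sum]
    congr 1
    calc ∑ j ∈ Icc 1 (p - 1), ((j : ZMod p)⁻¹) ^ 2 * (j : ZMod p) ^ (p - 1 - i)
        = ∑ j ∈ Icc 1 (p - 1), (j : ZMod p) ^ ((p - 2) * 2 + (p - 1 - i)) := by
          refine Finset.sum_congr rfl fun j hj => ?_
          simp only [mem_Icc] at hj
          rw [inv_eq_pow p (cast_ne_zero' p hj.1 hj.2), ← pow_mul, ← pow_add]
      _ = _ := pow_sum p _
  rw [Finset.sum_congr rfl hin]
  rw [Finset.sum_eq_single (p - 3)]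
  · have hdvd : (p - 1) ∣ ((p - 2) * 2 + (p - 1 - (p - 3))) := ⟨2, by omega⟩
    rw [if_pos hdvd]
    have hCsym : (p - 1).choose (p - 3) = (p - 1).choose 2 := by
      have he3 : p - 3 = p - 1 - 2 := by omega
      rw [he3, Nat.choose_symm (by omega : 2 ≤ p - 1)]
    have heven : 2 ∣ (p - 1) * (p - 2) := by
      have hodd : Odd p := hp.out.odd_of_ne_two (by omega)
      exact Dvd.dvd.mul_right (Nat.Odd.sub_odd hodd odd_one).two_dvd _
    have hC2 : 2 * ((p - 1).choose 2) = (p - 1) * (p - 2) := by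
      have hch := Nat.choose_two_right (p - 1)
      have he : p - 1 - 1 = p - 2 := by omega
      rw [he] at hch
      rw [hch, Nat.mul_div_cancel' heven]
    have hcastC : ((p - 1).choose (p - 3) : ZMod p) = 1 := by
      have hx := congrArg (Nat.cast : ℕ → ZMod p) hC2
      push_cast at hx
      rw [hCsym]
      rw [castp1 p, castp2 p] at hx
      have : (2 : ZMod p) * ((p - 1).choose 2 : ZMod p) = 2 * 1 := by
        rw [hx]; ring
      exact mul_left_cancel₀ (two_ne p hp3) this
    rw [hcastC]
    ring
  · intro i hi hne
    have hilt : i < p - 1 := mem_range.mp hi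
    have hnd : ¬ (p - 1) ∣ ((p - 2) * 2 + (p - 1 - i)) := by
      intro hdd
      obtain ⟨c, hc⟩ := hdd
      rcases c with _ | _ | _ | c
      · omega
      · omega
      · omega
      · have hge : (p - 1) * 3 ≤ (p - 1) * (c + 3) := Nat.mul_le_mul_left _ (by omega)
        have : (p - 1) * 3 ≤ (p - 2) * 2 + (p - 1 - i) := hc ▸ hge
        omega
    rw [if_neg hnd]
    ring
  · intro habs
    exact absurd (mem_range.mpr (by omega : p - 3 < p - 1)) habs

/-! ### Final assembly -/

theorem main_core :
    (8 : ZMod p) * ∑ k ∈ Icc 1 (p - 1), (k : ZMod p) * (gg p k * ss p k)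
      = 7 + 4 * bB p (p - 3) := by
  rw [core_eq p hp3, aa_eq p hp3]

omit hp3

/-- `(p-1)!` -/
def ff : ℕ := (p - 1).factorial

/-- integer-cleared main sum -/
def SS : ℕ := ∑ k ∈ Icc 1 (p - 1), k * ∑ j ∈ Icc 1 k, ∑ i ∈ Ico 1 j, ∑ l ∈ Icc 1 k,
  (ff p / l) * (ff p / l) * ((ff p / i) * ((ff p / j) * (ff p * ff p)))

/-- the integer numerator -/
def mZ : ℤ := 8 * ((bernoulli (p - 3)).den : ℤ) * (SS p : ℤ)
  - 7 * ((bernoulli (p - 3)).den : ℤ) * (ff p : ℤ) ^ 6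
  - 4 * (bernoulli (p - 3)).num * (ff p : ℤ) ^ 6

theorem hfl (l : ℕ) (h1 : 1 ≤ l) (h2 : l ≤ p - 1) :
    ((ff p / l : ℕ) : ℚ) = (ff p : ℚ) / (l : ℚ) :=
  Nat.cast_div (Nat.dvd_factorial h1 h2) (Nat.cast_ne_zero.mpr (by omega))

theorem claimA :
    (∑ k ∈ Finset.Icc 1 (p - 1), (k : ℚ) *
        ∑ j ∈ Finset.Icc 1 k, ∑ i ∈ Finset.Ico 1 j,
          harmonic' k 2 / ((i : ℚ) * j)
        - (7 / 8 + 1 / 2 * bernoulli (p - 3)))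
      * (8 * ((bernoulli (p - 3)).den : ℚ) * (ff p : ℚ) ^ 6) = (mZ p : ℚ) := by
  have hBden : ((bernoulli (p - 3)).den : ℚ) ≠ 0 := Nat.cast_ne_zero.mpr (Rat.den_nz _)
  have hmZ : (mZ p : ℚ) = 8 * ((bernoulli (p - 3)).den : ℚ) * (SS p : ℚ)
      - 7 * ((bernoulli (p - 3)).den : ℚ) * (ff p : ℚ) ^ 6
      - 4 * ((bernoulli (p - 3)).num : ℚ) * (ff p : ℚ) ^ 6 := by
    rw [mZ]; push_cast; ring
  rw [hmZ, sub_mul]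
  have hconst : (7 / 8 + 1 / 2 * bernoulli (p - 3))
        * (8 * ((bernoulli (p - 3)).den : ℚ) * (ff p : ℚ) ^ 6)
      = 7 * ((bernoulli (p - 3)).den : ℚ) * (ff p : ℚ) ^ 6
        + 4 * ((bernoulli (p - 3)).num : ℚ) * (ff p : ℚ) ^ 6 := by
    linear_combination (4 * (ff p : ℚ) ^ 6) * (Rat.mul_den_eq_num (bernoulli (p - 3)))
  rw [hconst]
  have hsum : (∑ k ∈ Finset.Icc 1 (p - 1), (k : ℚ) *
        ∑ j ∈ Finset.Icc 1 k, ∑ i ∈ Finset.Ico 1 j, harmonic' k 2 / ((i : ℚ) * j))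
      * (8 * ((bernoulli (p - 3)).den : ℚ) * (ff p : ℚ) ^ 6)
      = 8 * ((bernoulli (p - 3)).den : ℚ) * (SS p : ℚ) := by
    rw [SS]
    push_cast
    rw [Finset.sum_mul, Finset.mul_sum]
    refine Finset.sum_congr rfl fun k hk => ?_
    simp only [mem_Icc] at hk
    simp only [harmonic', Finset.sum_div, Finset.mul_sum, Finset.sum_mul]
    refine Finset.sum_congr rfl fun j hj => ?_
    simp only [mem_Icc] at hj
    refine Finset.sum_congr rfl fun i hi => ?_
    simp only [mem_Ico] at hi
    refine Finset.sum_congr rfl fun l hl => ?_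
    simp only [mem_Icc] at hl
    have hI : 1 ≤ i := hi.1
    have hJ : 1 ≤ j := by omega
    have hL : 1 ≤ l := hl.1
    have hIp : i ≤ p - 1 := by omega
    have hJp : j ≤ p - 1 := by omega
    have hLp : l ≤ p - 1 := by omega
    rw [hfl p l hL hLp, hfl p i hI hIp, hfl p j hJ hJp]
    have hi0 : (i : ℚ) ≠ 0 := Nat.cast_ne_zero.mpr (by omega)
    have hj0 : (j : ℚ) ≠ 0 := Nat.cast_ne_zero.mpr (by omega)
    have hl0 : (l : ℚ) ≠ 0 := Nat.cast_ne_zero.mpr (by omega)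
    field_simp
  rw [hsum]
  ring

include hp3

theorem hcd (l : ℕ) (h1 : 1 ≤ l) (h2 : l ≤ p - 1) :
    ((ff p / l : ℕ) : ZMod p) = (ff p : ZMod p) * (l : ZMod p)⁻¹ := by
  have hdvd : l ∣ ff p := Nat.dvd_factorial h1 h2
  have hml : ((ff p / l : ℕ) : ZMod p) * (l : ZMod p) = (ff p : ZMod p) := by
    exact_mod_cast congrArg (Nat.cast : ℕ → ZMod p) (Nat.div_mul_cancel hdvd)
  have hlne : (l : ZMod p) ≠ 0 := cast_ne_zero' p h1 h2
  field_simp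
  exact hml

theorem expand_gs (k : ℕ) :
    gg p k * ss p k = ∑ j ∈ Icc 1 k, ∑ i ∈ Icc 1 (j - 1), ∑ l ∈ Icc 1 k,
      ((l : ZMod p)⁻¹) ^ 2 * ((j : ZMod p)⁻¹ * (i : ZMod p)⁻¹) := by
  rw [ss_def, Finset.mul_sum]
  refine Finset.sum_congr rfl fun j _ => ?_
  rw [hh_def, Finset.mul_sum, Finset.mul_sum]
  refine Finset.sum_congr rfl fun i _ => ?_
  rw [gg_def, Finset.sum_mul]

theorem claimC : ((mZ p : ℤ) : ZMod p) = 0 := by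
  have hple := hp.out.two_le
  have hSS : ((SS p : ℕ) : ZMod p)
      = (ff p : ZMod p) ^ 6 * ∑ k ∈ Icc 1 (p - 1), (k : ZMod p) * (gg p k * ss p k) := by
    rw [SS]
    push_cast
    rw [Finset.mul_sum]
    refine Finset.sum_congr rfl fun k hk => ?_
    simp only [mem_Icc] at hk
    have hexp : ∑ j ∈ Icc 1 k, ∑ i ∈ Ico 1 j, ∑ l ∈ Icc 1 k,
          (((ff p / l : ℕ) : ZMod p) * ((ff p / l : ℕ) : ZMod p)
            * (((ff p / i : ℕ) : ZMod p) * (((ff p / j : ℕ) : ZMod p)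
              * ((ff p : ZMod p) * (ff p : ZMod p)))))
        = (ff p : ZMod p) ^ 6 * (gg p k * ss p k) := by
      rw [expand_gs p hp3 k]
      rw [Finset.mul_sum]
      refine Finset.sum_congr rfl fun j hj => ?_
      simp only [mem_Icc] at hj
      rw [Ico_one_eq_Icc, Finset.mul_sum]
      refine Finset.sum_congr rfl fun i hi => ?_
      simp only [mem_Icc] at hi
      rw [Finset.mul_sum]
      refine Finset.sum_congr rfl fun l hl => ?_
      simp only [mem_Icc] at hl
      have hI : 1 ≤ i := hi.1
      have hJ : 1 ≤ j := hj.1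
      have hL : 1 ≤ l := hl.1
      rw [hcd p hp3 l hL (by omega), hcd p hp3 i hI (by omega), hcd p hp3 j hJ (by omega)]
      ring
    rw [hexp]
    ring
  have hmain := main_core p hp3
  rw [bB_def] at hmain
  have hden_ne : ((bernoulli (p - 3)).den : ZMod p) ≠ 0 := bern_den_ne p hp3 (p - 3) (by omega)
  have hcancel : ((bernoulli (p - 3)).den : ZMod p) * ((bernoulli (p - 3)).den : ZMod p)⁻¹ = 1 :=
    mul_inv_cancel₀ hden_ne
  have h0 : ((mZ p : ℤ) : ZMod p)
      = 8 * ((bernoulli (p - 3)).den : ZMod p) * ((SS p : ℕ) : ZMod p)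
        - 7 * ((bernoulli (p - 3)).den : ZMod p) * (ff p : ZMod p) ^ 6
        - 4 * ((bernoulli (p - 3)).num : ZMod p) * (ff p : ZMod p) ^ 6 := by
    rw [mZ]; push_cast; ring
  rw [h0, hSS]
  linear_combination ((ff p : ZMod p) ^ 6 * ((bernoulli (p - 3)).den : ZMod p)) * hmain
    + (4 * ((bernoulli (p - 3)).num : ZMod p) * (ff p : ZMod p) ^ 6) * hcancel

theorem claimB : ¬ p ∣ 8 * (bernoulli (p - 3)).den * (ff p) ^ 6 := by
  intro hdvd
  rcases (Nat.Prime.dvd_mul hp.out).mp hdvd with h | h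
  · rcases (Nat.Prime.dvd_mul hp.out).mp h with h8 | hden
    · have : p ∣ 2 := hp.out.dvd_of_dvd_pow (n := 3) (by norm_num at h8 ⊢; exact_mod_cast h8)
      have := Nat.le_of_dvd (by norm_num) this
      omega
    · exact bern_den_not_dvd p hp3 (p - 3) (by omega) hden
  · have hf : p ∣ ff p := hp.out.dvd_of_dvd_pow h
    rw [ff] at hf
    have := (Nat.Prime.dvd_factorial hp.out).mp hf
    omega

end Stmt9

theorem stmt_9 (p : ℕ) [hp : Fact p.Prime] (hp3 : 3 < p) :
    ‖((∑ k ∈ Finset.Icc 1 (p - 1), (k : ℚ) *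
        ∑ j ∈ Finset.Icc 1 k, ∑ i ∈ Finset.Ico 1 j,
          harmonic' k 2 / ((i : ℚ) * j)
        - (7 / 8 + 1 / 2 * bernoulli (p - 3)) : ℚ) : ℚ_[p])‖ ≤ (p : ℝ) ^ (-1 : ℤ) := by
  have hA := Stmt9.claimA p
  have hC := Stmt9.claimC p hp3
  have hB := Stmt9.claimB p hp3
  have hdvd : (p : ℤ) ∣ Stmt9.mZ p := (ZMod.intCast_zmod_eq_zero_iff_dvd (Stmt9.mZ p) p).mp hC
  have hnormm : ‖((Stmt9.mZ p : ℤ) : ℚ_[p])‖ ≤ (p : ℝ) ^ (-1 : ℤ) := by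
    have h1 := (Padic.norm_int_le_pow_iff_dvd (p := p) (Stmt9.mZ p) 1).mpr (by simpa using hdvd)
    simpa using h1
  have hcnat : ¬ p ∣ 8 * (bernoulli (p - 3)).den * (Stmt9.ff p) ^ 6 := hB
  have hnc : ‖(((8 * (bernoulli (p - 3)).den * (Stmt9.ff p) ^ 6 : ℕ) : ℤ) : ℚ_[p])‖ = 1 := by
    rcases lt_or_eq_of_le (Padic.norm_int_le_one (p := p)
        ((8 * (bernoulli (p - 3)).den * (Stmt9.ff p) ^ 6 : ℕ) : ℤ)) with h' | h'
    · exfalso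
      have := Padic.norm_intCast_lt_one_iff.mp h'
      exact hcnat (by exact_mod_cast this)
    · exact h'
  have hcast : ((∑ k ∈ Finset.Icc 1 (p - 1), (k : ℚ) *
        ∑ j ∈ Finset.Icc 1 k, ∑ i ∈ Finset.Ico 1 j,
          harmonic' k 2 / ((i : ℚ) * j)
        - (7 / 8 + 1 / 2 * bernoulli (p - 3)) : ℚ) : ℚ_[p])
        * (((8 * (bernoulli (p - 3)).den * (Stmt9.ff p) ^ 6 : ℕ) : ℤ) : ℚ_[p])
      = ((Stmt9.mZ p : ℤ) : ℚ_[p]) := by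
    have h2 := congrArg (fun x : ℚ => (x : ℚ_[p])) hA
    push_cast at h2 ⊢
    convert h2 using 2
  calc ‖((∑ k ∈ Finset.Icc 1 (p - 1), (k : ℚ) *
        ∑ j ∈ Finset.Icc 1 k, ∑ i ∈ Finset.Ico 1 j,
          harmonic' k 2 / ((i : ℚ) * j)
        - (7 / 8 + 1 / 2 * bernoulli (p - 3)) : ℚ) : ℚ_[p])‖
      = ‖((∑ k ∈ Finset.Icc 1 (p - 1), (k : ℚ) *
        ∑ j ∈ Finset.Icc 1 k, ∑ i ∈ Finset.Ico 1 j,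
          harmonic' k 2 / ((i : ℚ) * j)
        - (7 / 8 + 1 / 2 * bernoulli (p - 3)) : ℚ) : ℚ_[p])‖
        * ‖(((8 * (bernoulli (p - 3)).den * (Stmt9.ff p) ^ 6 : ℕ) : ℤ) : ℚ_[p])‖ := by
        rw [hnc, mul_one]
    _ = ‖((∑ k ∈ Finset.Icc 1 (p - 1), (k : ℚ) *
        ∑ j ∈ Finset.Icc 1 k, ∑ i ∈ Finset.Ico 1 j,
          harmonic' k 2 / ((i : ℚ) * j)
        - (7 / 8 + 1 / 2 * bernoulli (p - 3)) : ℚ) : ℚ_[p])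
        * (((8 * (bernoulli (p - 3)).den * (Stmt9.ff p) ^ 6 : ℕ) : ℤ) : ℚ_[p])‖ :=
        (norm_mul _ _).symm
    _ = ‖((Stmt9.mZ p : ℤ) : ℚ_[p])‖ := by rw [hcast]
    _ ≤ (p : ℝ) ^ (-1 : ℤ) := hnormm
end

section
/- For any prime p > 3, the sum over k from 0 to p-1 of k times the sum over 1 ≤ i < j ≤ k of 1/(i^2 j^2) is congruent to -(1/2)·B_{p-3} modulo p. -/
set_option linter.unusedSectionVars false

open Finset

section Infra
variable (p : ℕ) [hp : Fact p.Prime]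

def Pgood (x : ℚ) : Prop := ¬ p ∣ x.den

variable {p}

lemma pgood_natCast (n : ℕ) : Pgood p (n : ℚ) := by
  simp only [Pgood, Rat.den_natCast]
  exact hp.out.not_dvd_one

lemma pgood_one : Pgood p (1 : ℚ) := by simpa using pgood_natCast 1

lemma pgood_add {x y : ℚ} (hx : Pgood p x) (hy : Pgood p y) : Pgood p (x + y) := by
  intro h
  rcases (hp.out.dvd_mul.mp (h.trans (Rat.add_den_dvd x y))) with h' | h'
  · exact hx h'
  · exact hy h'

lemma pgood_mul {x y : ℚ} (hx : Pgood p x) (hy : Pgood p y) : Pgood p (x * y) := by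
  intro h
  rcases (hp.out.dvd_mul.mp (h.trans (Rat.mul_den_dvd x y))) with h' | h'
  · exact hx h'
  · exact hy h'

lemma pgood_neg {x : ℚ} (hx : Pgood p x) : Pgood p (-x) := by
  simpa [Pgood, Rat.den_neg_eq_den] using hx

lemma pgood_sub {x y : ℚ} (hx : Pgood p x) (hy : Pgood p y) : Pgood p (x - y) := by
  rw [sub_eq_add_neg]; exact pgood_add hx (pgood_neg hy)

lemma pgood_sum {α : Type*} {s : Finset α} {f : α → ℚ} (h : ∀ i ∈ s, Pgood p (f i)) :
    Pgood p (∑ i ∈ s, f i) := by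
  classical
  induction s using Finset.induction_on with
  | empty => simpa using pgood_natCast 0
  | @insert _ _ hx ih =>
    rw [Finset.sum_insert hx]
    exact pgood_add (h _ (Finset.mem_insert_self _ _))
      (ih fun i hi => h i (Finset.mem_insert_of_mem hi))

lemma pgood_inv_nat {n : ℕ} (hn : ¬ p ∣ n) : Pgood p ((n : ℚ)⁻¹) := by
  have hn0 : 0 < n := by
    rcases Nat.eq_zero_or_pos n with h | h
    · exact absurd (h ▸ dvd_zero p) hn
    · exact h
  simpa [Pgood, Rat.inv_natCast_den_of_pos hn0] using hn

lemma pgood_div_nat {x : ℚ} {n : ℕ} (hx : Pgood p x) (hn : ¬ p ∣ n) :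
    Pgood p (x / (n : ℚ)) := by
  rw [div_eq_mul_inv]; exact pgood_mul hx (pgood_inv_nat hn)

lemma den_ne {x : ℚ} (hx : Pgood p x) : ((x.den : ZMod p)) ≠ 0 := by
  rw [Ne, ZMod.natCast_eq_zero_iff]
  exact hx

lemma cast_good_add {x y : ℚ} (hx : Pgood p x) (hy : Pgood p y) :
    ((x + y : ℚ) : ZMod p) = (x : ZMod p) + (y : ZMod p) :=
  Rat.cast_add_of_ne_zero (den_ne hx) (den_ne hy)

lemma cast_good_mul {x y : ℚ} (hx : Pgood p x) (hy : Pgood p y) :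
    ((x * y : ℚ) : ZMod p) = (x : ZMod p) * (y : ZMod p) :=
  Rat.cast_mul_of_ne_zero (den_ne hx) (den_ne hy)

lemma cast_good_sub {x y : ℚ} (hx : Pgood p x) (hy : Pgood p y) :
    ((x - y : ℚ) : ZMod p) = (x : ZMod p) - (y : ZMod p) :=
  Rat.cast_sub_of_ne_zero (den_ne hx) (den_ne hy)

lemma cast_good_div_nat {x : ℚ} (hx : Pgood p x) {n : ℕ} (hn : ¬ p ∣ n) :
    ((x / (n : ℚ) : ℚ) : ZMod p) = (x : ZMod p) / (n : ZMod p) := by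
  have hnum : (((n : ℚ).num : ZMod p)) ≠ 0 := by
    rw [Rat.num_natCast]
    push_cast
    rw [Ne, ZMod.natCast_eq_zero_iff]
    exact hn
  rw [Rat.cast_div_of_ne_zero (den_ne hx) hnum, Rat.cast_natCast]

lemma cast_good_sum {α : Type*} {s : Finset α} {f : α → ℚ} (h : ∀ i ∈ s, Pgood p (f i)) :
    ((∑ i ∈ s, f i : ℚ) : ZMod p) = ∑ i ∈ s, ((f i : ℚ) : ZMod p) := by
  classical
  induction s using Finset.induction_on with
  | empty => simp
  | @insert _ _ hx ih =>
    rw [Finset.sum_insert hx, Finset.sum_insert hx,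
      cast_good_add (h _ (Finset.mem_insert_self _ _))
        (pgood_sum fun i hi => h i (Finset.mem_insert_of_mem hi)),
      ih fun i hi => h i (Finset.mem_insert_of_mem hi)]

end Infra

section Bern
variable {p : ℕ} [hp : Fact p.Prime]

lemma not_dvd_of_lt {n : ℕ} (h0 : 0 < n) (h1 : n < p) : ¬ p ∣ n := fun h =>
  absurd (Nat.le_of_dvd h0 h) (not_le.mpr h1)

lemma pgood_bernoulli : ∀ m : ℕ, m + 1 < p → Pgood p (bernoulli m) := by
  intro m
  induction m using Nat.strong_induction_on with
  | _ m ih =>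
    intro hm
    rcases Nat.eq_zero_or_pos m with rfl | hm0
    · simpa using pgood_one
    · have hs := sum_bernoulli (m + 1)
      rw [if_neg (by omega)] at hs
      rw [Finset.sum_range_succ, Nat.choose_succ_self_right] at hs
      have hb : (bernoulli m : ℚ) =
          -(∑ k ∈ range m, ((m + 1).choose k : ℚ) * bernoulli k) / ((m + 1 : ℕ) : ℚ) := by
        have hne : ((m + 1 : ℕ) : ℚ) ≠ 0 := by positivity
        field_simp
        push_cast at hs ⊢
        linarith [hs]
      rw [hb]
      exact pgood_div_nat
        (pgood_neg (pgood_sum fun k hk => by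
          have hk' := Finset.mem_range.mp hk
          exact pgood_mul (pgood_natCast _) (ih k hk' (by omega))))
        (not_dvd_of_lt (by omega) hm)

end Bern

section Pow
variable {p : ℕ} [hp : Fact p.Prime]

lemma zmod_icc_ne_zero {x : ℕ} (hx : x ∈ Icc 1 (p - 1)) : ((x : ZMod p)) ≠ 0 := by
  rw [Finset.mem_Icc] at hx
  rw [Ne, ZMod.natCast_eq_zero_iff]
  have := hp.out.two_le
  exact not_dvd_of_lt (by omega) (by omega)

lemma range_p_eq : range p = insert 0 (Icc 1 (p - 1)) := by
  have := hp.out.two_le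
  ext x
  simp only [Finset.mem_range, Finset.mem_insert, Finset.mem_Icc]
  omega

lemma sum_range_zmod (g : ZMod p → ZMod p) :
    ∑ x ∈ range p, g ((x : ZMod p)) = ∑ x : ZMod p, g x := by
  haveI : NeZero p := ⟨hp.out.pos.ne'⟩
  exact Finset.sum_nbij' (fun x => ((x : ZMod p))) ZMod.val
    (fun a _ => Finset.mem_univ _)
    (fun a _ => Finset.mem_range.mpr (ZMod.val_lt a))
    (fun a ha => ZMod.val_cast_of_lt (Finset.mem_range.mp ha))
    (fun a _ => ZMod.natCast_rightInverse a)
    (fun a _ => rfl)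

lemma powsum_small {m : ℕ} (hm1 : 0 < m) (hm2 : m < p - 1) :
    ∑ x ∈ Icc 1 (p - 1), ((x : ZMod p)) ^ m = 0 := by
  have h1 : ∑ x ∈ range p, ((x : ZMod p)) ^ m = ∑ x : ZMod p, x ^ m :=
    sum_range_zmod (fun y => y ^ m)
  have h2 : ∑ x : ZMod p, x ^ m = 0 := by
    apply FiniteField.sum_pow_lt_card_sub_one
    rwa [ZMod.card]
  rw [range_p_eq, Finset.sum_insert (by simp)] at h1
  rw [h2] at h1
  have h0 : ((0 : ℕ) : ZMod p) ^ m = 0 := by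
    simp [zero_pow hm1.ne']
  rw [h0, zero_add] at h1
  exact h1

lemma cast_p_sub_one : (((p - 1 : ℕ) : ZMod p)) = -1 := by
  have h1 : 1 ≤ p := hp.out.pos
  push_cast [Nat.cast_sub h1]
  simp [ZMod.natCast_self]

lemma powsum_full {m : ℕ} (hm1 : 0 < m) (hm2 : m < 2 * (p - 1)) :
    ∑ x ∈ Icc 1 (p - 1), ((x : ZMod p)) ^ m = if m = p - 1 then -1 else 0 := by
  have h2 := hp.out.two_le
  split_ifs with h
  · subst h
    have : ∀ x ∈ Icc 1 (p - 1), ((x : ZMod p)) ^ (p - 1) = 1 := fun x hx =>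
      ZMod.pow_card_sub_one_eq_one (zmod_icc_ne_zero hx)
    rw [Finset.sum_congr rfl this, Finset.sum_const, Nat.card_Icc]
    simp only [Nat.add_sub_cancel, nsmul_eq_mul, mul_one]
    exact cast_p_sub_one
  · rcases lt_or_ge m (p - 1) with hlt | hge
    · exact powsum_small hm1 hlt
    · have hgt : p - 1 < m := lt_of_le_of_ne hge (fun hh => h hh.symm)
      set r := m - (p - 1) with hr
      have hrm : m = (p - 1) + r := by omega
      have hstep : ∀ x ∈ Icc 1 (p - 1), ((x : ZMod p)) ^ m = ((x : ZMod p)) ^ r := by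
        intro x hx
        rw [hrm, pow_add, ZMod.pow_card_sub_one_eq_one (zmod_icc_ne_zero hx), one_mul]
      rw [Finset.sum_congr rfl hstep]
      exact powsum_small (by omega) (by omega)

end Pow

section Norm
variable {p : ℕ} [hp : Fact p.Prime]

lemma norm_le_of_pgood_cast_zero {x : ℚ} (hx : Pgood p x)
    (h0 : ((x : ℚ) : ZMod p) = 0) : ‖(x : ℚ_[p])‖ ≤ (p : ℝ) ^ (-1 : ℤ) := by
  have hden : ((x.den : ZMod p)) ≠ 0 := den_ne hx
  have hnum : ((x.num : ZMod p)) = 0 := by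
    rw [Rat.cast_def] at h0
    rcases div_eq_zero_iff.mp h0 with h | h
    · exact h
    · exact absurd h hden
  obtain ⟨m, hm⟩ := (ZMod.intCast_zmod_eq_zero_iff_dvd _ _).mp hnum
  have hx' : (x : ℚ_[p]) = ((x.num : ℚ_[p])) / ((x.den : ℚ_[p])) := by
    conv_lhs => rw [← Rat.num_div_den x]
    push_cast
    ring
  have hdennorm : ‖((x.den : ℚ_[p]))‖ = 1 := by
    have h1 : ((x.den : ℚ_[p])) = (((x.den : ℤ)) : ℚ_[p]) := by push_cast; ring
    rw [h1]
    refine le_antisymm (Padic.norm_int_le_one _) ?_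
    by_contra hlt
    push_neg at hlt
    have := (Padic.norm_intCast_lt_one_iff (k := (x.den : ℤ))).mp hlt
    exact hx (Int.natCast_dvd_natCast.mp this)
  have hnumnorm : ‖((x.num : ℚ_[p]))‖ ≤ (p : ℝ)⁻¹ := by
    rw [hm]
    push_cast
    rw [norm_mul, Padic.norm_p]
    calc (p : ℝ)⁻¹ * ‖((m : ℚ_[p]))‖ ≤ (p : ℝ)⁻¹ * 1 := by
          exact mul_le_mul_of_nonneg_left (Padic.norm_int_le_one m)
            (by positivity)
      _ = (p : ℝ)⁻¹ := mul_one _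
  rw [hx', norm_div, hdennorm, div_one, zpow_neg_one]
  exact hnumnorm

end Norm

section Main
variable {p : ℕ} [hp : Fact p.Prime]

lemma five_le (hp3 : 3 < p) : 5 ≤ p := by
  have h4 : p ≠ 4 := by rintro rfl; have := hp.out; norm_num at this
  omega

lemma not_dvd_sq_mul {i j : ℕ} (hi0 : 0 < i) (hip : i < p) (hj0 : 0 < j) (hjp : j < p) :
    ¬ p ∣ i ^ 2 * j ^ 2 := by
  intro h
  rcases hp.out.dvd_mul.mp h with h' | h' <;>
    [exact not_dvd_of_lt hi0 hip (hp.out.dvd_of_dvd_pow h');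
     exact not_dvd_of_lt hj0 hjp (hp.out.dvd_of_dvd_pow h')]

lemma pgood_term {i j : ℕ} (hi0 : 0 < i) (hip : i < p) (hj0 : 0 < j) (hjp : j < p) :
    Pgood p (1 / ((i : ℚ) ^ 2 * (j : ℚ) ^ 2)) := by
  have hq : (1 / ((i : ℚ) ^ 2 * (j : ℚ) ^ 2)) = (((i ^ 2 * j ^ 2 : ℕ) : ℚ))⁻¹ := by
    push_cast; rw [one_div]
  rw [hq]
  exact pgood_inv_nat (not_dvd_sq_mul hi0 hip hj0 hjp)

lemma cast_term (hp3 : 3 < p) {i j : ℕ} (hi0 : 0 < i) (hip : i < p) (hj0 : 0 < j)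
    (hjp : j < p) :
    ((1 / ((i : ℚ) ^ 2 * (j : ℚ) ^ 2) : ℚ) : ZMod p) =
      (i : ZMod p) ^ (p - 3) * (j : ZMod p) ^ (p - 3) := by
  have h5 := five_le hp3
  have hq : (1 / ((i : ℚ) ^ 2 * (j : ℚ) ^ 2)) = (((i ^ 2 * j ^ 2 : ℕ) : ℚ))⁻¹ := by
    push_cast; rw [one_div]
  have hnum : ((((i ^ 2 * j ^ 2 : ℕ) : ℚ)).num : ZMod p) ≠ 0 := by
    rw [Rat.num_natCast, Int.cast_natCast, Ne, ZMod.natCast_eq_zero_iff]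
    exact not_dvd_sq_mul hi0 hip hj0 hjp
  rw [hq, Rat.cast_inv_of_ne_zero hnum, Rat.cast_natCast]
  have hiF : ((i : ZMod p)) ≠ 0 := by
    rw [Ne, ZMod.natCast_eq_zero_iff]; exact not_dvd_of_lt hi0 hip
  have hjF : ((j : ZMod p)) ≠ 0 := by
    rw [Ne, ZMod.natCast_eq_zero_iff]; exact not_dvd_of_lt hj0 hjp
  apply inv_eq_of_mul_eq_one_right
  push_cast
  have hcomb : ((i : ZMod p) ^ 2 * (j : ZMod p) ^ 2) *
      ((i : ZMod p) ^ (p - 3) * (j : ZMod p) ^ (p - 3)) =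
      (i : ZMod p) ^ (2 + (p - 3)) * (j : ZMod p) ^ (2 + (p - 3)) := by
    rw [pow_add, pow_add]; ring
  rw [hcomb, show 2 + (p - 3) = p - 1 by omega,
    ZMod.pow_card_sub_one_eq_one hiF, ZMod.pow_card_sub_one_eq_one hjF, one_mul]

end Main

section Main2
variable {p : ℕ} [hp : Fact p.Prime]

lemma pgood_inner {k : ℕ} (hk : k < p) :
    ∀ j ∈ Icc 1 k, Pgood p (∑ i ∈ Ico 1 j, 1 / ((i : ℚ) ^ 2 * (j : ℚ) ^ 2)) := by
  intro j hj
  rw [Finset.mem_Icc] at hj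
  exact pgood_sum fun i hi => by
    rw [Finset.mem_Ico] at hi
    exact pgood_term (by omega) (by omega) (by omega) (by omega)

lemma pgood_lhs :
    Pgood p (∑ k ∈ range p, (k : ℚ) *
      ∑ j ∈ Icc 1 k, ∑ i ∈ Ico 1 j, 1 / ((i : ℚ) ^ 2 * (j : ℚ) ^ 2)) := by
  refine pgood_sum fun k hk => ?_
  rw [Finset.mem_range] at hk
  exact pgood_mul (pgood_natCast _) (pgood_sum (pgood_inner hk))

lemma cast_lhs (hp3 : 3 < p) :
    ((∑ k ∈ range p, (k : ℚ) *
        ∑ j ∈ Icc 1 k, ∑ i ∈ Ico 1 j, 1 / ((i : ℚ) ^ 2 * (j : ℚ) ^ 2) : ℚ) : ZMod p) =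
      ∑ k ∈ range p, (k : ZMod p) *
        ∑ j ∈ Icc 1 k, ∑ i ∈ Ico 1 j, ((i : ZMod p) ^ (p - 3) * (j : ZMod p) ^ (p - 3)) := by
  rw [cast_good_sum (fun k hk => by
    rw [Finset.mem_range] at hk
    exact pgood_mul (pgood_natCast _) (pgood_sum (pgood_inner hk)))]
  refine Finset.sum_congr rfl fun k hk => ?_
  rw [Finset.mem_range] at hk
  rw [cast_good_mul (pgood_natCast _) (pgood_sum (pgood_inner hk)), Rat.cast_natCast,
    cast_good_sum (pgood_inner hk)]
  congr 1
  refine Finset.sum_congr rfl fun j hj => ?_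
  rw [Finset.mem_Icc] at hj
  rw [cast_good_sum (fun i hi => by
    rw [Finset.mem_Ico] at hi
    exact pgood_term (by omega) (by omega) (by omega) (by omega))]
  refine Finset.sum_congr rfl fun i hi => ?_
  rw [Finset.mem_Ico] at hi
  exact cast_term hp3 (by omega) (by omega) (by omega) (by omega)

lemma gauss_icc (hp3 : 3 < p) {j : ℕ} (hj1 : 1 ≤ j) (hj2 : j ≤ p - 1) :
    (∑ k ∈ Icc j (p - 1), (k : ZMod p)) = ((j : ZMod p) - (j : ZMod p) ^ 2) / 2 := by
  have h5 := five_le hp3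
  have h2 : ((2 : ZMod p)) ≠ 0 := by
    have : ((2 : ℕ) : ZMod p) ≠ 0 := by
      rw [Ne, ZMod.natCast_eq_zero_iff]
      exact not_dvd_of_lt (by omega) (by omega)
    simpa using this
  have hIcc : Icc j (p - 1) = Ico j p := by
    rw [show p = (p - 1) + 1 by omega, Finset.Ico_add_one_right_eq_Icc]
    congr 1 <;> omega
  have hsub : ∑ k ∈ Ico j p, (k : ZMod p) =
      (∑ k ∈ range p, (k : ZMod p)) - ∑ k ∈ range j, (k : ZMod p) :=
    Finset.sum_Ico_eq_sub _ (by omega)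
  have hmul : ∀ n : ℕ, 1 ≤ n → (∑ k ∈ range n, (k : ZMod p)) * 2 =
      (n : ZMod p) ^ 2 - (n : ZMod p) := by
    intro n hn
    have hnat := Finset.sum_range_id_mul_two n
    have : ((∑ k ∈ range n, k) * 2 : ℕ) = ((n * (n - 1) : ℕ)) := hnat
    calc (∑ k ∈ range n, (k : ZMod p)) * 2
        = (((∑ k ∈ range n, k) * 2 : ℕ) : ZMod p) := by push_cast; ring
      _ = (((n * (n - 1) : ℕ)) : ZMod p) := by rw [this]
      _ = (n : ZMod p) ^ 2 - (n : ZMod p) := by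
          rw [Nat.cast_mul, Nat.cast_sub hn]; push_cast; ring
  have hp0 : (∑ k ∈ range p, (k : ZMod p)) * 2 = 0 := by
    rw [hmul p (by omega), ZMod.natCast_self]; ring
  have hpsum : (∑ k ∈ range p, (k : ZMod p)) = 0 := by
    rcases mul_eq_zero.mp hp0 with h | h
    · exact h
    · exact absurd h h2
  rw [hIcc, hsub, hpsum, zero_sub, eq_div_iff h2, neg_mul, hmul j hj1]
  ring

end Main2

section Main3
variable {p : ℕ} [hp : Fact p.Prime]

/-- The Faulhaber-based evaluation of `G j = ∑_{1 ≤ i < j} i^(p-3)` in `ZMod p`. -/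
lemma G_eq (hp3 : 3 < p) {j : ℕ} (hj1 : 1 ≤ j) :
    (∑ i ∈ Ico 1 j, (i : ZMod p) ^ (p - 3)) =
      ∑ t ∈ range (p - 3 + 1), ((bernoulli t : ℚ) : ZMod p) *
        (((p - 3 + 1).choose t : ℕ) : ZMod p) * (j : ZMod p) ^ (p - 3 + 1 - t) /
        (((p - 3 + 1 : ℕ)) : ZMod p) := by
  have h5 := five_le hp3
  have hA0 : 0 < p - 3 := by omega
  -- extend to range j
  have hext : (∑ i ∈ Ico 1 j, (i : ZMod p) ^ (p - 3)) =
      ∑ i ∈ range j, (i : ZMod p) ^ (p - 3) := by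
    have hr : range j = insert 0 (Ico 1 j) := by
      ext x; simp only [Finset.mem_range, Finset.mem_insert, Finset.mem_Ico]; omega
    rw [hr, Finset.sum_insert (by simp)]
    simp [zero_pow hA0.ne']
  rw [hext]
  -- cast Faulhaber from ℚ
  have hcast1 : (∑ i ∈ range j, (i : ZMod p) ^ (p - 3)) =
      ((∑ i ∈ range j, (i : ℚ) ^ (p - 3) : ℚ) : ZMod p) := by
    rw [cast_good_sum (fun i _ => by
      have : ((i : ℚ) ^ (p - 3)) = ((i ^ (p - 3) : ℕ) : ℚ) := by push_cast; ring
      rw [this]; exact pgood_natCast _)]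
    refine (Finset.sum_congr rfl fun i _ => ?_).symm
    have h1 : ((i : ℚ) ^ (p - 3)) = ((i ^ (p - 3) : ℕ) : ℚ) := by push_cast; ring
    rw [h1, Rat.cast_natCast]
    push_cast; ring
  rw [hcast1, sum_range_pow j (p - 3)]
  have hrw : ∀ t ∈ range (p - 3 + 1),
      bernoulli t * (((p - 3 + 1).choose t : ℕ) : ℚ) * (j : ℚ) ^ (p - 3 + 1 - t) /
        ((p - 3 : ℕ) + 1 : ℚ) =
      (bernoulli t * (((p - 3 + 1).choose t : ℕ) : ℚ) * (j : ℚ) ^ (p - 3 + 1 - t)) /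
        (((p - 3 + 1 : ℕ)) : ℚ) := by
    intro t _
    push_cast; ring
  rw [Finset.sum_congr rfl hrw]
  have hnd : ¬ p ∣ (p - 3 + 1) := not_dvd_of_lt (by omega) (by omega)
  have hgood : ∀ t ∈ range (p - 3 + 1),
      Pgood p ((bernoulli t * (((p - 3 + 1).choose t : ℕ) : ℚ) * (j : ℚ) ^ (p - 3 + 1 - t)) /
        (((p - 3 + 1 : ℕ)) : ℚ)) := by
    intro t ht
    rw [Finset.mem_range] at ht
    have hjq : ((j : ℚ) ^ (p - 3 + 1 - t)) = ((j ^ (p - 3 + 1 - t) : ℕ) : ℚ) := by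
      push_cast; ring
    refine pgood_div_nat ?_ hnd
    rw [hjq]
    exact pgood_mul (pgood_mul (pgood_bernoulli t (by omega)) (pgood_natCast _))
      (pgood_natCast _)
  rw [cast_good_sum hgood]
  refine Finset.sum_congr rfl fun t ht => ?_
  rw [Finset.mem_range] at ht
  have hjq : ((j : ℚ) ^ (p - 3 + 1 - t)) = ((j ^ (p - 3 + 1 - t) : ℕ) : ℚ) := by
    push_cast; ring
  rw [hjq, cast_good_div_nat (pgood_mul (pgood_mul (pgood_bernoulli t (by omega))
      (pgood_natCast _)) (pgood_natCast _)) hnd,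
    cast_good_mul (pgood_mul (pgood_bernoulli t (by omega)) (pgood_natCast _))
      (pgood_natCast _),
    cast_good_mul (pgood_bernoulli t (by omega)) (pgood_natCast _),
    Rat.cast_natCast, Rat.cast_natCast]
  push_cast
  ring

end Main3

section Main4
variable {p : ℕ} [hp : Fact p.Prime]

lemma sumG_eq_zero (hp3 : 3 < p) :
    ∑ j ∈ Icc 1 (p - 1), ∑ i ∈ Ico 1 j, (i : ZMod p) ^ (p - 3) = 0 := by
  have h5 := five_le hp3
  rw [Finset.sum_comm' (t' := Icc 1 (p - 1)) (s' := fun i => Icc (i + 1) (p - 1))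
    (by intro j i; simp only [Finset.mem_Icc, Finset.mem_Ico]; omega)]
  have step : ∀ i ∈ Icc 1 (p - 1),
      ∑ _j ∈ Icc (i + 1) (p - 1), (i : ZMod p) ^ (p - 3) =
        -((i : ZMod p) ^ (p - 3)) - (i : ZMod p) ^ (p - 3 + 1) := by
    intro i hi
    rw [Finset.mem_Icc] at hi
    rw [Finset.sum_const, Nat.card_Icc, nsmul_eq_mul]
    have hcard : (p - 1 + 1 - (i + 1)) = p - 1 - i := by omega
    have hcast : (((p - 1 - i : ℕ)) : ZMod p) = -1 - (i : ZMod p) := by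
      rw [Nat.cast_sub (by omega), cast_p_sub_one]
    rw [hcard, hcast, pow_succ]
    ring
  rw [Finset.sum_congr rfl step, Finset.sum_sub_distrib, Finset.sum_neg_distrib,
    powsum_full (by omega) (by omega), powsum_full (by omega) (by omega),
    if_neg (by omega), if_neg (by omega)]
  simp

lemma sumB_eq (hp3 : 3 < p) :
    ∑ j ∈ Icc 1 (p - 1), (j : ZMod p) ^ (p - 3 + 1) *
        (∑ i ∈ Ico 1 j, (i : ZMod p) ^ (p - 3)) =
      -((bernoulli (p - 3) : ℚ) : ZMod p) := by
  have h5 := five_le hp3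
  have hD : ((((p - 3 + 1 : ℕ))) : ZMod p) ≠ 0 := by
    rw [Ne, ZMod.natCast_eq_zero_iff]
    exact not_dvd_of_lt (by omega) (by omega)
  have step1 : ∀ j ∈ Icc 1 (p - 1), (j : ZMod p) ^ (p - 3 + 1) *
      (∑ i ∈ Ico 1 j, (i : ZMod p) ^ (p - 3)) =
      ∑ t ∈ range (p - 3 + 1),
        (((bernoulli t : ℚ) : ZMod p) * (((p - 3 + 1).choose t : ℕ) : ZMod p) /
          (((p - 3 + 1 : ℕ)) : ZMod p)) * (j : ZMod p) ^ ((p - 3 + 1) + (p - 3 + 1 - t)) := by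
    intro j hj
    rw [Finset.mem_Icc] at hj
    rw [G_eq hp3 hj.1, Finset.mul_sum]
    refine Finset.sum_congr rfl fun t ht => ?_
    rw [pow_add]
    ring
  rw [Finset.sum_congr rfl step1, Finset.sum_comm]
  have step2 : ∀ t ∈ range (p - 3 + 1),
      ∑ j ∈ Icc 1 (p - 1),
        (((bernoulli t : ℚ) : ZMod p) * (((p - 3 + 1).choose t : ℕ) : ZMod p) /
          (((p - 3 + 1 : ℕ)) : ZMod p)) * (j : ZMod p) ^ ((p - 3 + 1) + (p - 3 + 1 - t)) =
      (((bernoulli t : ℚ) : ZMod p) * (((p - 3 + 1).choose t : ℕ) : ZMod p) /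
          (((p - 3 + 1 : ℕ)) : ZMod p)) *
        (if ((p - 3 + 1) + (p - 3 + 1 - t)) = p - 1 then -1 else 0) := by
    intro t ht
    rw [Finset.mem_range] at ht
    rw [← Finset.mul_sum, powsum_full (by omega) (by omega)]
  rw [Finset.sum_congr rfl step2,
    Finset.sum_eq_single_of_mem (p - 3) (Finset.mem_range.mpr (by omega))
      (fun t ht hne => by
        rw [Finset.mem_range] at ht
        rw [if_neg (by omega), mul_zero]),
    if_pos (by omega), Nat.choose_succ_self_right]
  rw [mul_div_assoc, div_self hD, mul_one]
  ring

end Main4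

section Main5
variable {p : ℕ} [hp : Fact p.Prime]

lemma zmod_lhs_eq (hp3 : 3 < p) :
    (∑ k ∈ range p, (k : ZMod p) *
        ∑ j ∈ Icc 1 k, ∑ i ∈ Ico 1 j, ((i : ZMod p) ^ (p - 3) * (j : ZMod p) ^ (p - 3))) =
      -(((bernoulli (p - 3) : ℚ) : ZMod p)) / 2 := by
  have h5 := five_le hp3
  have h2 : ((2 : ZMod p)) ≠ 0 := by
    have : ((2 : ℕ) : ZMod p) ≠ 0 := by
      rw [Ne, ZMod.natCast_eq_zero_iff]
      exact not_dvd_of_lt (by omega) (by omega)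
    simpa using this
  have step1 : ∀ k ∈ range p, (k : ZMod p) *
      ∑ j ∈ Icc 1 k, ∑ i ∈ Ico 1 j, ((i : ZMod p) ^ (p - 3) * (j : ZMod p) ^ (p - 3)) =
      ∑ j ∈ Icc 1 k, (k : ZMod p) *
        ((j : ZMod p) ^ (p - 3) * ∑ i ∈ Ico 1 j, (i : ZMod p) ^ (p - 3)) := by
    intro k _
    rw [Finset.mul_sum]
    refine Finset.sum_congr rfl fun j _ => ?_
    rw [← Finset.sum_mul, mul_comm ((∑ i ∈ Ico 1 j, (i : ZMod p) ^ (p - 3))) _]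
  rw [Finset.sum_congr rfl step1,
    Finset.sum_comm' (t' := Icc 1 (p - 1)) (s' := fun j => Icc j (p - 1))
      (by intro k j; simp only [Finset.mem_range, Finset.mem_Icc]; omega)]
  have step3 : ∀ j ∈ Icc 1 (p - 1),
      ∑ k ∈ Icc j (p - 1), (k : ZMod p) *
        ((j : ZMod p) ^ (p - 3) * ∑ i ∈ Ico 1 j, (i : ZMod p) ^ (p - 3)) =
      ((j : ZMod p) ^ (p - 3 + 1) * ∑ i ∈ Ico 1 j, (i : ZMod p) ^ (p - 3)) / 2 -
        (∑ i ∈ Ico 1 j, (i : ZMod p) ^ (p - 3)) / 2 := by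
    intro j hj
    rw [Finset.mem_Icc] at hj
    rw [← Finset.sum_mul, gauss_icc hp3 hj.1 hj.2]
    have hfermat : (j : ZMod p) ^ (2 + (p - 3)) = 1 := by
      rw [show 2 + (p - 3) = p - 1 by omega]
      apply ZMod.pow_card_sub_one_eq_one
      rw [Ne, ZMod.natCast_eq_zero_iff]
      exact not_dvd_of_lt (by omega) (by omega)
    have expand : ((j : ZMod p) - (j : ZMod p) ^ 2) / 2 *
        ((j : ZMod p) ^ (p - 3) * ∑ i ∈ Ico 1 j, (i : ZMod p) ^ (p - 3)) =
        (((j : ZMod p) ^ (p - 3) * (j : ZMod p)) * ∑ i ∈ Ico 1 j, (i : ZMod p) ^ (p - 3)) / 2 -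
        (((j : ZMod p) ^ (2 + (p - 3))) * ∑ i ∈ Ico 1 j, (i : ZMod p) ^ (p - 3)) / 2 := by
      rw [pow_add]
      ring
    rw [expand, hfermat, one_mul, ← pow_succ]
  rw [Finset.sum_congr rfl step3, Finset.sum_sub_distrib, ← Finset.sum_div, ← Finset.sum_div,
    sumG_eq_zero hp3, sumB_eq hp3]
  ring

end Main5

theorem stmt_12 (p : ℕ) [hp : Fact p.Prime] (hp3 : 3 < p) :
    ‖((∑ k ∈ Finset.range p, (k : ℚ) *
        ∑ j ∈ Finset.Icc 1 k, ∑ i ∈ Finset.Ico 1 j, 1 / ((i : ℚ) ^ 2 * (j : ℚ) ^ 2)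
        - (-(1 / 2) * bernoulli (p - 3)) : ℚ) : ℚ_[p])‖ ≤ (p : ℝ) ^ (-1 : ℤ) := by
  have h5 : 5 ≤ p := five_le hp3
  have hgood_half : Pgood p (-(1 / 2 : ℚ)) := by
    have h : (-(1 / 2) : ℚ) = -(((2 : ℕ) : ℚ))⁻¹ := by norm_num
    rw [h]
    exact pgood_neg (pgood_inv_nat (not_dvd_of_lt (by omega) (by omega)))
  have hgood_b : Pgood p ((bernoulli (p - 3) : ℚ)) := pgood_bernoulli _ (by omega)
  have hgood : Pgood p ((∑ k ∈ Finset.range p, (k : ℚ) *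
      ∑ j ∈ Finset.Icc 1 k, ∑ i ∈ Finset.Ico 1 j, 1 / ((i : ℚ) ^ 2 * (j : ℚ) ^ 2))
      - (-(1 / 2) * bernoulli (p - 3))) :=
    pgood_sub pgood_lhs (pgood_mul hgood_half hgood_b)
  apply norm_le_of_pgood_cast_zero hgood
  rw [cast_good_sub pgood_lhs (pgood_mul hgood_half hgood_b), cast_lhs hp3, zmod_lhs_eq hp3,
    cast_good_mul hgood_half hgood_b]
  have h2 : ((2 : ZMod p)) ≠ 0 := by
    have : ((2 : ℕ) : ZMod p) ≠ 0 := by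
      rw [Ne, ZMod.natCast_eq_zero_iff]
      exact not_dvd_of_lt (by omega) (by omega)
    simpa using this
  have hhalf : ((-(1 / 2 : ℚ) : ℚ) : ZMod p) = -((2 : ZMod p))⁻¹ := by
    have h : (-(1 / 2) : ℚ) = -(((2 : ℕ) : ℚ))⁻¹ := by norm_num
    have hnum : ((((2 : ℕ) : ℚ)).num : ZMod p) ≠ 0 := by
      rw [Rat.num_natCast, Int.cast_natCast, Ne, ZMod.natCast_eq_zero_iff]
      exact not_dvd_of_lt (by omega) (by omega)
    rw [h, Rat.cast_neg, Rat.cast_inv_of_ne_zero hnum, Rat.cast_natCast]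
    norm_num
  rw [hhalf, div_eq_mul_inv]
  ring
end

section
/- Let r be a positive integer and p a prime with p > 2r+1. Then sum_{k=0}^{p-1} k^r·(k+1)^r·H_k^{(2)} ≡ 0 (mod p). -/
set_option linter.unusedSectionVars false
set_option linter.unusedVariables false
namespace Stmt14Aux
variable {p : ℕ} [hp : Fact p.Prime]

lemma eps_nonneg' : (0:ℝ) ≤ (p:ℝ)⁻¹ := by positivity

lemma norm_sum_le'' {ι : Type*} (s : Finset ι) (f : ι → ℚ_[p]) {C : ℝ} (hC : 0 ≤ C)
    (h : ∀ i ∈ s, ‖f i‖ ≤ C) : ‖∑ i ∈ s, f i‖ ≤ C := by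
  classical
  induction s using Finset.induction_on with
  | empty => simpa using hC
  | @insert a s hnot ih =>
    rw [Finset.sum_insert hnot]
    exact (Padic.nonarchimedean _ _).trans
      (max_le (h a (Finset.mem_insert_self a s)) (ih fun i hi => h i (Finset.mem_insert_of_mem hi)))

lemma norm_le_eps_of_dvd' {k : ℤ} (h : (p:ℤ) ∣ k) : ‖(k : ℚ_[p])‖ ≤ (p:ℝ)⁻¹ := by
  have := (Padic.norm_int_le_pow_iff_dvd (p := p) k 1).mpr (by simpa using h)
  simpa using this

lemma norm_natCast_le_one' (n : ℕ) : ‖(n : ℚ_[p])‖ ≤ 1 := by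
  have := Padic.norm_int_le_one (p := p) n
  simpa using this

lemma norm_natCast_eq_one' {i : ℕ} (h0 : 0 < i) (hip : i < p) : ‖(i : ℚ_[p])‖ = 1 := by
  have hle : ‖(i:ℚ_[p])‖ ≤ 1 := norm_natCast_le_one' i
  have hnd : ¬ ((p:ℤ) ∣ (i:ℤ)) := by
    rw [Int.natCast_dvd_natCast]
    exact Nat.not_dvd_of_pos_of_lt h0 hip
  have hlt := (Padic.norm_intCast_lt_one_iff (p := p) (k := i)).not.mpr hnd
  push_cast at hlt
  exact le_antisymm hle (not_lt.mp hlt)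

lemma norm_inv_sq_eq_one' {i : ℕ} (h0 : 0 < i) (hip : i < p) :
    ‖1/((i:ℚ_[p]))^2‖ = 1 := by
  rw [norm_div, norm_pow, norm_natCast_eq_one' h0 hip, norm_one]
  norm_num

lemma fermat_norm' {i : ℕ} (h0 : 0 < i) (hip : i < p) :
    ‖((i:ℚ_[p]))^(p-1) - 1‖ ≤ (p:ℝ)⁻¹ := by
  have hi : (i : ZMod p) ≠ 0 := by
    rw [Ne, ZMod.natCast_eq_zero_iff]
    exact Nat.not_dvd_of_pos_of_lt h0 hip
  have hf := ZMod.pow_card_sub_one_eq_one hi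
  have hz : (((i:ℤ)^(p-1) - 1 : ℤ) : ZMod p) = 0 := by
    push_cast
    rw [hf]
    ring
  have hd : (p:ℤ) ∣ (i:ℤ)^(p-1) - 1 := (ZMod.intCast_zmod_eq_zero_iff_dvd _ _).mp hz
  have := norm_le_eps_of_dvd' (p := p) hd
  push_cast at this
  exact this

lemma inv_sq_cong' (hp5 : 5 ≤ p) {i : ℕ} (h0 : 0 < i) (hip : i < p) :
    ‖1/((i:ℚ_[p]))^2 - ((i^(p-3) : ℕ) : ℚ_[p])‖ ≤ (p:ℝ)⁻¹ := by
  have hi1 : ‖(i:ℚ_[p])‖ = 1 := norm_natCast_eq_one' h0 hip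
  have hine : (i:ℚ_[p]) ≠ 0 := by
    intro h; rw [h] at hi1; simp at hi1
  have key : 1/((i:ℚ_[p]))^2 - ((i^(p-3):ℕ) : ℚ_[p])
      = (1/(i:ℚ_[p])^2) * (1 - (i:ℚ_[p])^(p-1)) := by
    push_cast
    have hpw : (i:ℚ_[p])^(p-1) = (i:ℚ_[p])^2 * (i:ℚ_[p])^(p-3) := by
      rw [← pow_add]; congr 1; omega
    rw [hpw]
    field_simp
  rw [key, norm_mul, norm_inv_sq_eq_one' h0 hip, one_mul, norm_sub_rev]
  exact fermat_norm' h0 hip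

lemma sum_pow_dvd' (hp5 : 5 ≤ p) :
    (p:ℤ) ∣ ((∑ i ∈ Finset.Icc 1 (p-1), i^(p-3) : ℕ) : ℤ) := by
  have hz : ((∑ i ∈ Finset.Icc 1 (p-1), i^(p-3) : ℕ) : ZMod p) = 0 := by
    push_cast
    have h1 : ∑ i ∈ Finset.Icc 1 (p-1), ((i:ZMod p))^(p-3)
        = ∑ i ∈ Finset.range p, ((i:ZMod p))^(p-3) := by
      rw [Finset.range_eq_Ico, Finset.sum_eq_sum_Ico_succ_bot (by omega : 0 < p)]
      rw [show Finset.Icc 1 (p-1) = Finset.Ico 1 p by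
        rw [← Finset.Ico_add_one_right_eq_Icc]; congr 1; omega]
      rw [Nat.cast_zero, zero_pow (show p - 3 ≠ 0 by omega), zero_add]
    have h2 : ∑ i ∈ Finset.range p, ((i:ZMod p))^(p-3) = ∑ x : ZMod p, x^(p-3) := by
      refine Finset.sum_nbij' (i := fun i : ℕ => (i : ZMod p)) (j := fun x : ZMod p => x.val)
        ?_ ?_ ?_ ?_ ?_
      · intro a _; exact Finset.mem_univ _
      · intro x _; rw [Finset.mem_range]; exact ZMod.val_lt x
      · intro a ha; rw [Finset.mem_range] at ha; exact ZMod.val_cast_of_lt ha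
      · intro x _; simp [ZMod.natCast_val, ZMod.cast_id]
      · intro a _; rfl
    rw [h1, h2]
    exact FiniteField.sum_pow_lt_card_sub_one (K := ZMod p) (p-3) (by rw [ZMod.card]; omega)
  exact_mod_cast (ZMod.natCast_eq_zero_iff _ _).mp hz

lemma H_all_small' (hp5 : 5 ≤ p) :
    ‖∑ i ∈ Finset.Icc 1 (p-1), 1/((i:ℚ_[p]))^2‖ ≤ (p:ℝ)⁻¹ := by
  have key : ∑ i ∈ Finset.Icc 1 (p-1), 1/((i:ℚ_[p]))^2
      = (∑ i ∈ Finset.Icc 1 (p-1), (1/((i:ℚ_[p]))^2 - ((i^(p-3):ℕ):ℚ_[p])))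
        + (((∑ i ∈ Finset.Icc 1 (p-1), i^(p-3) : ℕ) : ℤ) : ℚ_[p]) := by
    push_cast
    rw [Finset.sum_sub_distrib]
    ring
  rw [key]
  refine (Padic.nonarchimedean _ _).trans (max_le ?_ ?_)
  · refine norm_sum_le'' _ _ eps_nonneg' fun i hi => ?_
    obtain ⟨h1, h2⟩ := Finset.mem_Icc.mp hi
    exact inv_sq_cong' hp5 h1 (by omega)
  · exact norm_le_eps_of_dvd' (sum_pow_dvd' hp5)

lemma refl_term' (hp5 : 5 ≤ p) {j : ℕ} (h0 : 0 < j) (hj : j < p) :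
    ‖1/((j:ℚ_[p]))^2 - 1/(((p-j:ℕ):ℚ_[p]))^2‖ ≤ (p:ℝ)⁻¹ := by
  have hj1 : ‖(j:ℚ_[p])‖ = 1 := norm_natCast_eq_one' h0 hj
  have hpj1 : ‖((p-j:ℕ):ℚ_[p])‖ = 1 := norm_natCast_eq_one' (by omega) (by omega)
  have hjne : (j:ℚ_[p]) ≠ 0 := by intro h; rw [h] at hj1; simp at hj1
  have hpjne : ((p-j:ℕ):ℚ_[p]) ≠ 0 := by intro h; rw [h] at hpj1; simp at hpj1
  have key : 1/((j:ℚ_[p]))^2 - 1/(((p-j:ℕ):ℚ_[p]))^2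
      = (1/((j:ℚ_[p]))^2) * (1/(((p-j:ℕ):ℚ_[p]))^2)
        * (((((p-j:ℕ)^2 : ℤ) - ((j:ℤ))^2 : ℤ)) : ℚ_[p]) := by
    push_cast
    field_simp
  have hdvd : (p:ℤ) ∣ (((p-j:ℕ)^2 : ℤ) - ((j:ℤ))^2) := by
    have hc : ((p-j:ℕ) : ℤ) = (p:ℤ) - (j:ℤ) := by
      rw [Nat.cast_sub hj.le]
    rw [hc]
    exact ⟨(p:ℤ) - 2*j, by ring⟩
  rw [key, norm_mul, norm_mul, norm_inv_sq_eq_one' h0 hj,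
    norm_inv_sq_eq_one' (i := p - j) (by omega) (by omega), one_mul, one_mul]
  exact norm_le_eps_of_dvd' hdvd

lemma H_pair' (hp5 : 5 ≤ p) {k : ℕ} (hk : k < p) :
    ‖(∑ i ∈ Finset.Icc 1 (p-1-k), 1/((i:ℚ_[p]))^2)
      + (∑ i ∈ Finset.Icc 1 k, 1/((i:ℚ_[p]))^2)‖ ≤ (p:ℝ)⁻¹ := by
  have hIoc : ∀ m : ℕ, Finset.Icc 1 m = Finset.Ioc 0 m := fun m => Finset.Icc_add_one_left_eq_Ioc 0 m
  have hsplit : (∑ i ∈ Finset.Ioc 0 (p-1-k), 1/((i:ℚ_[p]))^2)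
      + (∑ i ∈ Finset.Ioc (p-1-k) (p-1), 1/((i:ℚ_[p]))^2)
      = ∑ i ∈ Finset.Ioc 0 (p-1), 1/((i:ℚ_[p]))^2 :=
    Finset.sum_Ioc_consecutive _ (by omega) (by omega)
  have hT : ∑ i ∈ Finset.Ioc (p-1-k) (p-1), 1/((i:ℚ_[p]))^2
      = ∑ j ∈ Finset.Ioc 0 k, 1/(((p-j:ℕ):ℚ_[p]))^2 := by
    refine Finset.sum_nbij' (i := fun i : ℕ => p - i) (j := fun j : ℕ => p - j) ?_ ?_ ?_ ?_ ?_
    · intro a ha; simp only [Finset.mem_Ioc] at ha ⊢; omega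
    · intro a ha; simp only [Finset.mem_Ioc] at ha ⊢; omega
    · intro a ha; simp only [Finset.mem_Ioc] at ha; omega
    · intro a ha; simp only [Finset.mem_Ioc] at ha; omega
    · intro a ha; simp only [Finset.mem_Ioc] at ha
      rw [show p - (p - a) = a by omega]
  have hdecomp : (∑ i ∈ Finset.Icc 1 (p-1-k), 1/((i:ℚ_[p]))^2)
      + (∑ i ∈ Finset.Icc 1 k, 1/((i:ℚ_[p]))^2)
      = (∑ i ∈ Finset.Icc 1 (p-1), 1/((i:ℚ_[p]))^2)
        + ∑ j ∈ Finset.Ioc 0 k, (1/((j:ℚ_[p]))^2 - 1/(((p-j:ℕ):ℚ_[p]))^2) := by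
    rw [Finset.sum_sub_distrib, ← hT, hIoc, hIoc, hIoc, ← hsplit]
    ring
  rw [hdecomp]
  refine (Padic.nonarchimedean _ _).trans (max_le (H_all_small' hp5) ?_)
  refine norm_sum_le'' _ _ eps_nonneg' fun j hj => ?_
  rw [Finset.mem_Ioc] at hj
  exact refl_term' hp5 (by omega) (by omega)

lemma A_pair' (r : ℕ) {k : ℕ} (hk : k < p) :
    ‖(((p-1-k:ℕ):ℚ_[p]))^r * (((p-1-k:ℕ):ℚ_[p]) + 1)^r - ((k:ℚ_[p]))^r * ((k:ℚ_[p]) + 1)^r‖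
      ≤ (p:ℝ)⁻¹ := by
  set k' := p - 1 - k with hk'def
  have hcast : (((k':ℕ):ℚ_[p]))^r * (((k':ℕ):ℚ_[p]) + 1)^r - ((k:ℚ_[p]))^r * ((k:ℚ_[p]) + 1)^r
      = ((((k':ℤ)^r * ((k':ℤ)+1)^r - (k:ℤ)^r * ((k:ℤ)+1)^r : ℤ)) : ℚ_[p]) := by
    push_cast
    ring
  rw [hcast]
  apply norm_le_eps_of_dvd'
  have h0 : ((((k':ℤ)^r * ((k':ℤ)+1)^r - (k:ℤ)^r * ((k:ℤ)+1)^r : ℤ)) : ZMod p) = 0 := by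
    have hsum : ((k' + (k + 1) : ℕ) : ZMod p) = 0 := by
      rw [show k' + (k + 1) = p by omega]
      exact ZMod.natCast_self p
    push_cast at hsum ⊢
    have hk'c : ((k' : ℤ) : ZMod p) = -((k:ZMod p) + 1) := by
      push_cast
      linear_combination hsum
    push_cast at hk'c
    rw [hk'c]
    have e1 : (-((k:ZMod p)+1))^r * ((-((k:ZMod p)+1)) + 1)^r
        = (((k:ZMod p)+1) * (k:ZMod p))^r := by
      rw [show (-((k:ZMod p)+1)) + 1 = -(k:ZMod p) by ring, ← mul_pow, neg_mul_neg]
    rw [e1, ← mul_pow]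
    ring_nf
  exact (ZMod.intCast_zmod_eq_zero_iff_dvd _ _).mp h0

end Stmt14Aux

open Stmt14Aux in
theorem stmt_14 (r p : ℕ) (hr : 0 < r) [hp : Fact p.Prime] (hpr : 2 * r + 1 < p) :
    ‖((∑ k ∈ Finset.range p, (k : ℚ) ^ r * ((k : ℚ) + 1) ^ r * harmonic' k 2 : ℚ)
      : ℚ_[p])‖ ≤ (p : ℝ) ^ (-1 : ℤ) := by
  have hp5 : 5 ≤ p := by
    rcases Nat.lt_or_ge p 5 with h | h
    · have h4 : p = 4 := by omega
      rw [h4] at hp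
      exact absurd hp.out (by decide)
    · exact h
  rw [show ((p : ℝ) ^ (-1 : ℤ)) = (p:ℝ)⁻¹ by rw [zpow_neg_one]]
  simp only [harmonic']
  push_cast
  set G : ℕ → ℚ_[p] := fun k =>
    (k:ℚ_[p])^r * ((k:ℚ_[p])+1)^r * ∑ i ∈ Finset.Icc 1 k, 1/((i:ℚ_[p]))^2 with hG
  show ‖∑ k ∈ Finset.range p, G k‖ ≤ (p:ℝ)⁻¹
  have h2 : ‖(2:ℚ_[p])‖ = 1 := by
    have := norm_natCast_eq_one' (p := p) (i := 2) (by omega) (by omega)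
    push_cast at this
    exact this
  have hrw : ‖∑ k ∈ Finset.range p, G k‖ = ‖(2:ℚ_[p]) * ∑ k ∈ Finset.range p, G k‖ := by
    rw [norm_mul, h2, one_mul]
  rw [hrw]
  have h2sum : (2:ℚ_[p]) * ∑ k ∈ Finset.range p, G k
      = ∑ k ∈ Finset.range p, (G (p-1-k) + G k) := by
    rw [Finset.sum_add_distrib, Finset.sum_range_reflect]
    ring
  rw [h2sum]
  refine norm_sum_le'' _ _ eps_nonneg' fun k hk => ?_
  rw [Finset.mem_range] at hk
  set k' := p - 1 - k with hk'
  set A' : ℚ_[p] := ((k':ℕ):ℚ_[p])^r * (((k':ℕ):ℚ_[p])+1)^r with hA'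
  set A : ℚ_[p] := ((k:ℕ):ℚ_[p])^r * (((k:ℕ):ℚ_[p])+1)^r with hA
  set Hk' : ℚ_[p] := ∑ i ∈ Finset.Icc 1 k', 1/((i:ℚ_[p]))^2 with hHk'
  set Hk : ℚ_[p] := ∑ i ∈ Finset.Icc 1 k, 1/((i:ℚ_[p]))^2 with hHk
  have hdecomp : G k' + G k = A' * (Hk' + Hk) - (A' - A) * Hk := by
    simp only [hG]
    ring
  rw [hdecomp]
  have hnA' : ‖A'‖ ≤ 1 := by
    rw [hA']
    calc ‖((k':ℕ):ℚ_[p])^r * (((k':ℕ):ℚ_[p])+1)^r‖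
        = ‖((k'^r * (k'+1)^r : ℕ) : ℚ_[p])‖ := by push_cast; ring_nf
      _ ≤ 1 := norm_natCast_le_one' _
  have hnHk : ‖Hk‖ ≤ 1 := by
    refine norm_sum_le'' _ _ zero_le_one fun i hi => ?_
    rw [Finset.mem_Icc] at hi
    exact le_of_eq (norm_inv_sq_eq_one' (by omega) (by omega))
  have hb1 : ‖A' * (Hk' + Hk)‖ ≤ (p:ℝ)⁻¹ := by
    rw [norm_mul]
    calc ‖A'‖ * ‖Hk' + Hk‖ ≤ 1 * (p:ℝ)⁻¹ :=
          mul_le_mul hnA' (H_pair' hp5 hk) (norm_nonneg _) zero_le_one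
      _ = (p:ℝ)⁻¹ := one_mul _
  have hb2 : ‖(A' - A) * Hk‖ ≤ (p:ℝ)⁻¹ := by
    rw [norm_mul]
    calc ‖A' - A‖ * ‖Hk‖ ≤ (p:ℝ)⁻¹ * 1 :=
          mul_le_mul (A_pair' r hk) hnHk (norm_nonneg _) eps_nonneg'
      _ = (p:ℝ)⁻¹ := mul_one _
  calc ‖A' * (Hk' + Hk) - (A' - A) * Hk‖
      ≤ max ‖A' * (Hk' + Hk)‖ ‖-((A' - A) * Hk)‖ := by
        rw [sub_eq_add_neg]; exact Padic.nonarchimedean _ _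
    _ ≤ (p:ℝ)⁻¹ := by rw [norm_neg]; exact max_le hb1 hb2
end

section
/- Let r be a positive integer and p a prime with p > 2r+1. Then sum_{k=0}^{p-1} k^r·(1/(p+1) + k)^r·(-1)^k·C(p-1, k) = 0. -/
open Finset Polynomial fwdDiff

private lemma fwdDiff_eval (P : ℚ[X]) :
    Δ_[(1:ℕ)] (fun k : ℕ ↦ P.eval (k : ℚ)) =
      fun k : ℕ ↦ (P.comp (X + 1) - P).eval (k : ℚ) := by
  funext k
  simp [fwdDiff, Polynomial.eval_comp]

private lemma fwdDiff_iter_poly_zero : ∀ (n : ℕ) (P : ℚ[X]), P.degree < n →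
    (Δ_[(1:ℕ)])^[n] (fun k : ℕ ↦ P.eval (k : ℚ)) = 0 := by
  intro n
  induction n with
  | zero =>
    intro P hP
    have hb : P.degree = ⊥ := Nat.WithBot.lt_zero_iff.mp (by exact_mod_cast hP)
    have : P = 0 := Polynomial.degree_eq_bot.mp hb
    subst this
    funext k; simp
  | succ n IH =>
    intro P hP
    rw [Function.iterate_succ_apply, fwdDiff_eval]
    set Q : ℚ[X] := P.comp (X + 1) - P with hQdef
    by_cases hQ : Q = 0
    · rw [hQ]
      exact IH 0 (by rw [Polynomial.degree_zero]; exact WithBot.bot_lt_coe n)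
    · have hP0 : P ≠ 0 := by
        intro h; apply hQ; simp [hQdef, h]
      have hnd : (X + 1 : ℚ[X]).natDegree = 1 := by
        simpa using Polynomial.natDegree_X_add_C (1:ℚ)
      have hc0 : P.comp (X + 1) ≠ 0 := by
          intro h
          have := Polynomial.natDegree_comp (p := P) (q := (X + 1 : ℚ[X]))
          have hlc : (P.comp (X + 1)).leadingCoeff ≠ 0 := by
            rw [Polynomial.leadingCoeff_comp (by rw [hnd]; norm_num)]
            simp [Polynomial.leadingCoeff_eq_zero, hP0,
              (by simpa using Polynomial.leadingCoeff_X_add_C (1:ℚ) : (X + 1:ℚ[X]).leadingCoeff = 1)]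
          exact hlc (by simp [h])
      have hdeg_comp : (P.comp (X + 1)).degree = P.degree := by
        rw [Polynomial.degree_eq_natDegree hc0, Polynomial.degree_eq_natDegree hP0,
          Polynomial.natDegree_comp, hnd, mul_one]
      have hlc : (P.comp (X + 1)).leadingCoeff = P.leadingCoeff := by
        rw [Polynomial.leadingCoeff_comp (by rw [hnd]; norm_num),
          (by simpa using Polynomial.leadingCoeff_X_add_C (1:ℚ) : (X + 1:ℚ[X]).leadingCoeff = 1)]
        simp
      have hQP : Q.degree < P.degree := by
        have := Polynomial.degree_sub_lt hdeg_comp hc0 hlc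
        rwa [hdeg_comp] at this
      have hQn : Q.degree < n := by
        have h1 : Q.natDegree < P.natDegree :=
          Polynomial.natDegree_lt_natDegree hQ hQP
        have h2 : P.natDegree < n + 1 :=
          (Polynomial.natDegree_lt_iff_degree_lt hP0).mpr (by exact_mod_cast hP)
        exact (Polynomial.natDegree_lt_iff_degree_lt hQ).mp (by omega)
      exact IH Q hQn

theorem stmt_16 (r p : ℕ) (hr : 0 < r) (hp : p.Prime) (hpr : 2 * r + 1 < p) :
    ∑ k ∈ Finset.range p,
        (k : ℚ) ^ r * (1 / ((p : ℚ) + 1) + k) ^ r * (-1 : ℚ) ^ k *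
          (Nat.choose (p - 1) k : ℚ) = 0 := by
  set c : ℚ := 1 / ((p : ℚ) + 1) with hc
  set n : ℕ := p - 1 with hn
  have hpn : p = n + 1 := by
    have := hp.one_lt; omega
  set P : ℚ[X] := X ^ r * (Polynomial.C c + X) ^ r with hP
  set f : ℕ → ℚ := fun k : ℕ ↦ P.eval (k : ℚ) with hf
  have hfk : ∀ k : ℕ, f k = (k : ℚ) ^ r * (c + k) ^ r := by
    intro k; simp [hf, hP]
  have hdeg : P.degree < n := by
    have h1 : P.degree = ((2 * r : ℕ) : WithBot ℕ) := by
      rw [hP, Polynomial.degree_mul, Polynomial.degree_pow, Polynomial.degree_pow,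
        Polynomial.degree_X, add_comm (Polynomial.C c) X,
        Polynomial.degree_X_add_C]
      push_cast
      ring
    rw [h1]
    exact_mod_cast (by omega : 2 * r < n)
  have hzero : (Δ_[(1:ℕ)])^[n] f 0 = 0 := by
    rw [fwdDiff_iter_poly_zero n P hdeg]; rfl
  have hsum := fwdDiff_iter_eq_sum_shift (1 : ℕ) f n 0
  rw [hzero] at hsum
  have hsum' : (0 : ℚ) =
      ∑ k ∈ Finset.range (n + 1), ((-1 : ℚ) ^ (n - k) * (Nat.choose n k : ℚ)) * f k := by
    rw [hsum]
    refine Finset.sum_congr rfl fun k hk => ?_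
    have : (0 : ℕ) + k • (1 : ℕ) = k := by simp
    rw [this]
    push_cast [zsmul_eq_mul]
    ring
  have key : ∑ k ∈ Finset.range (n + 1),
      (k : ℚ) ^ r * (c + k) ^ r * (-1 : ℚ) ^ k * (Nat.choose n k : ℚ)
      = (-1 : ℚ) ^ n * ∑ k ∈ Finset.range (n + 1),
          ((-1 : ℚ) ^ (n - k) * (Nat.choose n k : ℚ)) * f k := by
    rw [Finset.mul_sum]
    refine Finset.sum_congr rfl fun k hk => ?_
    have hkn : k ≤ n := by
      have := Finset.mem_range.mp hk; omega
    have hsign : (-1 : ℚ) ^ n * (-1 : ℚ) ^ (n - k) = (-1 : ℚ) ^ k := by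
      rw [← pow_add]
      have : n + (n - k) = k + 2 * (n - k) := by omega
      rw [this, pow_add, pow_mul]
      norm_num
    rw [hfk k]
    calc (k : ℚ) ^ r * (c + k) ^ r * (-1 : ℚ) ^ k * (Nat.choose n k : ℚ)
        = ((-1:ℚ)^n * (-1:ℚ)^(n-k)) * ((Nat.choose n k : ℚ) * ((k : ℚ) ^ r * (c + k) ^ r)) := by
          rw [hsign]; ring
      _ = (-1:ℚ)^n * ((-1 : ℚ) ^ (n - k) * (Nat.choose n k : ℚ) * ((k : ℚ) ^ r * (c + k) ^ r)) := by
          ring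
  rw [hpn]
  have hgoal : ∑ k ∈ Finset.range (n + 1),
      (k : ℚ) ^ r * (c + k) ^ r * (-1 : ℚ) ^ k * (Nat.choose n k : ℚ) = 0 := by
    rw [key, ← hsum', mul_zero]
  have : p - 1 = n := hn.symm
  simpa [this] using hgoal
end

section
/- For any prime p > 3, sum_{k=0}^{p-1} (2pk - 2k - 1)·(-1)^k·C(2p-1, k) ≡ 8p^4 + 4p^3 + 3p^2 (mod p^5). -/
open Finset


-- closed form for the partial alternating sum
lemma aux_sum (m n : ℕ) :
    ∑ k ∈ Finset.range (n + 2),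
      (((m : ℤ) + 2) * k - 1) * (-1) ^ k * ((m + 3).choose k : ℤ)
      = (-1) ^ (n + 1) *
        ((((m : ℤ) + 2) * ((m : ℤ) + 3)) * ((m + 1).choose n : ℤ)
          - ((m + 2).choose (n + 1) : ℤ)) := by
  induction n with
  | zero =>
      rw [Finset.sum_range_succ, Finset.sum_range_succ, Finset.sum_range_zero]
      simp [Nat.choose_one_right, Nat.choose]
      ring
  | succ n ih =>
      rw [Finset.sum_range_succ, ih]
      have pas2 : ((m + 3).choose (n + 2) : ℤ)
          = ((m + 2).choose (n + 1) : ℤ) + ((m + 2).choose (n + 2) : ℤ) := by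
        rw [show m + 3 = (m + 2) + 1 from rfl, Nat.choose_succ_succ (m + 2) (n + 1)]
        push_cast; ring
      have pas3 : ((m + 2).choose (n + 1) : ℤ)
          = ((m + 1).choose n : ℤ) + ((m + 1).choose (n + 1) : ℤ) := by
        rw [show m + 2 = (m + 1) + 1 from rfl, Nat.choose_succ_succ (m + 1) n]
        push_cast; ring
      have key : ((m : ℤ) + 3) * ((m + 2).choose (n + 1) : ℤ)
          = ((m + 3).choose (n + 2) : ℤ) * ((n : ℤ) + 2) := by
        exact_mod_cast congrArg (fun x : ℕ => (x : ℤ)) (Nat.add_one_mul_choose_eq (m + 2) (n + 1))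
      push_cast
      linear_combination ((-1:ℤ)^n*((m:ℤ)+2)*((m:ℤ)+3))*pas3 - ((-1:ℤ)^n*((m:ℤ)+2))*key - ((-1:ℤ)^n)*pas2


lemma choose_sub_one_cast (p : ℕ) (hp : p.Prime) :
    ∀ j, j < p → (((p - 1).choose j : ZMod p)) = (-1) ^ j := by
  haveI : Fact p.Prime := ⟨hp⟩
  intro j
  induction j with
  | zero => simp
  | succ j ih =>
      intro hj
      have hij := ih (by omega)
      have hps : p - 1 + 1 = p := by omega
      have h1 : p.choose (j + 1) = (p - 1).choose j + (p - 1).choose (j + 1) := by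
        conv_lhs => rw [← hps]
        exact Nat.choose_succ_succ _ _
      have h2 : ((p.choose (j + 1) : ZMod p)) = 0 := by
        rw [ZMod.natCast_eq_zero_iff]
        exact hp.dvd_choose_self (Nat.succ_ne_zero j) hj
      have h3 : ((p - 1).choose j : ZMod p) + ((p - 1).choose (j + 1) : ZMod p) = 0 := by
        rw [← Nat.cast_add, ← h1, h2]
      rw [hij] at h3
      rw [pow_succ]
      linear_combination h3

lemma wolstenholme (p : ℕ) (hp : p.Prime) (hp3 : 3 < p) :
    ((p : ℤ)) ^ 3 ∣ ((2 * p).choose p : ℤ) - 2 := by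
  haveI : Fact p.Prime := ⟨hp⟩
  have hp0 : 0 < p := hp.pos
  -- Vandermonde
  have hV : (2 * p).choose p = ∑ k ∈ range (p + 1), p.choose k * p.choose k := by
    rw [two_mul, Nat.add_choose_eq, Finset.Nat.sum_antidiagonal_eq_sum_range_succ_mk]
    refine Finset.sum_congr rfl fun k hk => ?_
    rw [mem_range] at hk
    rw [Nat.choose_symm (by omega : k ≤ p)]
  -- split off k = 0 and k = p
  have hsplit : ∑ k ∈ range (p + 1), p.choose k * p.choose k
      = (∑ k ∈ Ico 1 p, p.choose k * p.choose k) + 2 := by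
    rw [Finset.sum_range_succ, Finset.range_eq_Ico,
      Finset.sum_eq_sum_Ico_succ_bot hp0]
    simp [Nat.choose_self, Nat.choose_zero_right]
    ring
  -- each choose p k is divisible by p
  set m : ℕ → ℕ := fun k => p.choose k / p with hm_def
  have hm : ∀ k ∈ Ico 1 p, p.choose k = p * m k := by
    intro k hk
    rw [mem_Ico] at hk
    exact (Nat.mul_div_cancel' (hp.dvd_choose_self (by omega) hk.2)).symm
  have hsum2 : ∑ k ∈ Ico 1 p, p.choose k * p.choose k
      = p ^ 2 * ∑ k ∈ Ico 1 p, m k * m k := by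
    rw [Finset.mul_sum]
    refine Finset.sum_congr rfl fun k hk => ?_
    rw [hm k hk]; ring
  -- the key divisibility : p ∣ ∑ (m k)^2
  have hmk : ∀ k ∈ Ico 1 p, ((m k : ZMod p)) ^ 2 = ((k : ZMod p)⁻¹) ^ 2 := by
    intro k hk
    rw [mem_Ico] at hk
    obtain ⟨j, rfl⟩ : ∃ j, k = j + 1 := ⟨k - 1, by omega⟩
    -- (j+1) * m (j+1) = (p-1).choose j
    have hb : p * ((p - 1).choose j) = p.choose (j + 1) * (j + 1) := by
      have h := Nat.add_one_mul_choose_eq (p - 1) j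
      have hps : p - 1 + 1 = p := by omega
      simpa only [Nat.succ_eq_add_one, hps] using h
    have hc : p * ((p - 1).choose j) = p * (m (j + 1) * (j + 1)) := by
      rw [hb, hm (j + 1) (by rw [mem_Ico]; omega)]; ring
    have hd : (p - 1).choose j = m (j + 1) * (j + 1) := by
      exact Nat.eq_of_mul_eq_mul_left hp0 hc
    have he : ((m (j + 1) : ZMod p) * ((j + 1 : ℕ) : ZMod p)) = (-1) ^ j := by
      rw [← Nat.cast_mul, ← hd, choose_sub_one_cast p hp j (by omega)]
    have hk0 : (((j + 1 : ℕ) : ZMod p)) ≠ 0 := by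
      rw [Ne, ZMod.natCast_eq_zero_iff]
      intro h
      exact absurd (Nat.le_of_dvd (by omega) h) (by omega)
    have hsq : ((m (j + 1) : ZMod p)) ^ 2 * (((j + 1 : ℕ) : ZMod p)) ^ 2 = 1 := by
      have := congrArg (fun x => x ^ 2) he
      simp only [mul_pow] at this
      rw [this, ← pow_mul, pow_mul']
      norm_num
    have hinv : (((j + 1 : ℕ) : ZMod p)) * (((j + 1 : ℕ) : ZMod p))⁻¹ = 1 :=
      mul_inv_cancel₀ hk0
    linear_combination ((((j + 1 : ℕ) : ZMod p))⁻¹) ^ 2 * hsq -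
      ((m (j + 1) : ZMod p)) ^ 2 *
        ((((j + 1 : ℕ) : ZMod p)) * (((j + 1 : ℕ) : ZMod p))⁻¹ + 1) * hinv
  have hsum0 : (∑ k ∈ Ico 1 p, ((m k : ZMod p)) ^ 2) = 0 := by
    rw [Finset.sum_congr rfl hmk]
    have e1 : ∑ k ∈ Ico 1 p, ((k : ZMod p)⁻¹) ^ 2
        = ∑ x ∈ (univ \ {0} : Finset (ZMod p)), (x⁻¹) ^ 2 := by
      refine Finset.sum_nbij' (fun k => (k : ZMod p)) (fun x => x.val) ?_ ?_ ?_ ?_ ?_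
      · intro a ha
        rw [mem_Ico] at ha
        simp only [mem_sdiff, mem_univ, true_and, mem_singleton]
        intro h
        rw [ZMod.natCast_eq_zero_iff] at h
        exact absurd (Nat.le_of_dvd (by omega) h) (by omega)
      · intro x hx
        simp only [mem_sdiff, mem_univ, true_and, mem_singleton] at hx
        rw [mem_Ico]
        refine ⟨?_, x.val_lt⟩
        have hv : x.val ≠ 0 := fun h => hx ((ZMod.val_eq_zero x).mp h)
        exact Nat.pos_of_ne_zero hv
      · intro a ha
        rw [mem_Ico] at ha
        exact ZMod.val_cast_of_lt ha.2
      · intro x hx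
        exact ZMod.natCast_zmod_val x
      · intro a _; rfl
    have e2 : ∑ x ∈ (univ \ {0} : Finset (ZMod p)), (x⁻¹) ^ 2
        = ∑ x ∈ (univ \ {0} : Finset (ZMod p)), x ^ 2 := by
      refine Finset.sum_nbij' (fun x => x⁻¹) (fun x => x⁻¹) ?_ ?_ ?_ ?_ ?_
      · intro a ha
        simp only [mem_sdiff, mem_univ, true_and, mem_singleton] at ha ⊢
        exact inv_ne_zero ha
      · intro a ha
        simp only [mem_sdiff, mem_univ, true_and, mem_singleton] at ha ⊢
        exact inv_ne_zero ha
      · intro a _; exact inv_inv a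
      · intro a _; exact inv_inv a
      · intro a _; rfl
    have e3 : ∑ x ∈ (univ \ {0} : Finset (ZMod p)), x ^ 2 = ∑ x : ZMod p, x ^ 2 := by
      rw [Finset.sum_sdiff_eq_sub (Finset.subset_univ _)]
      simp
    have e4 : ∑ x : ZMod p, x ^ 2 = 0 := by
      refine FiniteField.sum_pow_lt_card_sub_one (ZMod p) 2 ?_
      rw [ZMod.card]
      omega
    rw [e1, e2, e3, e4]
  have hdvd : p ∣ ∑ k ∈ Ico 1 p, m k * m k := by
    rw [← ZMod.natCast_eq_zero_iff]
    push_cast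
    rw [← hsum0]
    refine Finset.sum_congr rfl fun k _ => ?_
    ring
  obtain ⟨s, hs⟩ := hdvd
  have : ((2 * p).choose p : ℤ) - 2 = (p : ℤ) ^ 3 * s := by
    have : (2 * p).choose p = p ^ 2 * (p * s) + 2 := by
      rw [hV, hsplit, hsum2, hs]
    rw [this]
    push_cast
    ring
  exact ⟨s, this⟩

theorem stmt_17 (p : ℕ) (hp : p.Prime) (hp3 : 3 < p) :
    (∑ k ∈ Finset.range p,
        (2 * (p : ℤ) * k - 2 * k - 1) * (-1) ^ k * (Nat.choose (2 * p - 1) k : ℤ))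
      ≡ 8 * (p : ℤ) ^ 4 + 4 * (p : ℤ) ^ 3 + 3 * (p : ℤ) ^ 2 [ZMOD (p : ℤ) ^ 5] := by
  have hp5 : 5 ≤ p := by
    have h4 : p ≠ 4 := by rintro rfl; norm_num at hp
    omega
  obtain ⟨n, rfl⟩ : ∃ n, p = n + 2 := ⟨p - 2, by omega⟩
  have hodd : Odd (n + 2) := hp.odd_of_ne_two (by omega)
  have hn_odd : Odd n := by
    rcases hodd with ⟨r, hr⟩; exact ⟨r - 1, by omega⟩
  have h2p : 2 * (n + 2) - 1 = 2 * n + 3 := by omega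
  rw [h2p]
  -- closed form for the sum
  have hS : (∑ k ∈ Finset.range (n + 2),
        (2 * ((n + 2 : ℕ) : ℤ) * k - 2 * k - 1) * (-1) ^ k * ((2 * n + 3).choose k : ℤ))
      = ((2 * (n : ℤ) + 2) * (2 * (n : ℤ) + 3)) * ((2 * n + 1).choose n : ℤ)
          - ((2 * n + 2).choose (n + 1) : ℤ) := by
    have h1 : (∑ k ∈ Finset.range (n + 2),
          (2 * ((n + 2 : ℕ) : ℤ) * k - 2 * k - 1) * (-1) ^ k * ((2 * n + 3).choose k : ℤ))
        = ∑ k ∈ Finset.range (n + 2),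
          ((((2 * n : ℕ) : ℤ) + 2) * k - 1) * (-1) ^ k * ((2 * n + 3).choose k : ℤ) := by
      refine Finset.sum_congr rfl fun k _ => ?_
      push_cast; ring
    rw [h1, aux_sum (2 * n) n]
    have hE : (-1 : ℤ) ^ (n + 1) = 1 := Even.neg_one_pow hn_odd.add_one
    rw [hE]
    push_cast; ring
  rw [hS]
  -- binomial identities
  have hsymm1 : (2 * n + 1).choose (n + 1) = (2 * n + 1).choose n := by
    have h := Nat.choose_symm (show n + 1 ≤ 2 * n + 1 by omega)
    rw [show 2 * n + 1 - (n + 1) = n by omega] at h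
    exact h.symm
  have hf1n : (2 * n + 2).choose (n + 1) = 2 * ((2 * n + 1).choose n) := by
    have h : (2 * n + 2).choose (n + 1) = (2 * n + 1).choose n + (2 * n + 1).choose (n + 1) := by
      rw [show 2 * n + 2 = (2 * n + 1) + 1 by ring]
      exact Nat.choose_succ_succ' _ _
    omega
  have hsymm2 : (2 * n + 3).choose (n + 1) = (2 * n + 3).choose (n + 2) := by
    have h := Nat.choose_symm (show n + 1 ≤ 2 * n + 3 by omega)
    rw [show 2 * n + 3 - (n + 1) = n + 2 by omega] at h
    exact h.symm
  have hf3n : (2 * n + 4).choose (n + 2) = 2 * ((2 * n + 3).choose (n + 2)) := by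
    have h : (2 * n + 4).choose (n + 2) = (2 * n + 3).choose (n + 1) + (2 * n + 3).choose (n + 2) := by
      rw [show 2 * n + 4 = (2 * n + 3) + 1 by ring, show n + 2 = (n + 1) + 1 by ring]
      exact Nat.choose_succ_succ' _ _
    omega
  have hf1 : ((2 * n + 2).choose (n + 1) : ℤ) = 2 * ((2 * n + 1).choose n : ℤ) := by
    exact_mod_cast congrArg (fun x : ℕ => (x : ℤ)) hf1n
  have hf2 : (2 * (n : ℤ) + 3) * ((2 * n + 2).choose (n + 1) : ℤ)
      = ((2 * n + 3).choose (n + 2) : ℤ) * ((n : ℤ) + 2) := by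
    exact_mod_cast congrArg (fun x : ℕ => (x : ℤ)) (Nat.add_one_mul_choose_eq (2 * n + 2) (n + 1))
  -- Wolstenholme
  have hw := wolstenholme (n + 2) hp (by omega)
  rw [show 2 * (n + 2) = 2 * n + 4 by ring, hf3n] at hw
  push_cast at hw
  have hcop2 : IsCoprime (((n : ℤ) + 2) ^ 3) (2 : ℤ) := by
    rcases hn_odd with ⟨r, hr⟩
    have : IsCoprime ((n : ℤ) + 2) (2 : ℤ) :=
      ⟨1, -((r : ℤ) + 1), by subst hr; push_cast; ring⟩
    exact this.pow_left
  have hCd : ((n : ℤ) + 2) ^ 3 ∣ ((2 * n + 3).choose (n + 2) : ℤ) - 1 := by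
    refine hcop2.dvd_of_dvd_mul_left ?_
    have : (2 : ℤ) * (((2 * n + 3).choose (n + 2) : ℤ) - 1)
        = 2 * ((2 * n + 3).choose (n + 2) : ℤ) - 2 := by ring
    rw [this]
    exact_mod_cast hw
  obtain ⟨t, ht⟩ := hCd
  have ht' : ((2 * n + 3).choose (n + 2) : ℤ) = 1 + ((n : ℤ) + 2) ^ 3 * t := by
    linear_combination ht
  -- final congruence
  rw [Int.modEq_iff_dvd]
  have hq : ((n + 2 : ℕ) : ℤ) = (n : ℤ) + 2 := by push_cast; ring
  rw [hq]
  have hc2 : IsCoprime ((n : ℤ) + 2) (2 : ℤ) := by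
    rcases hn_odd with ⟨r, hr⟩
    exact ⟨1, -((r : ℤ) + 1), by subst hr; push_cast; ring⟩
  have hcop3 : IsCoprime (((n : ℤ) + 2) ^ 5) (2 * (2 * (n : ℤ) + 3)) := by
    have h2 : IsCoprime ((n : ℤ) + 2) (2 * (n : ℤ) + 3) := ⟨2, -1, by ring⟩
    exact (hc2.mul_right h2).pow_left
  refine hcop3.dvd_of_dvd_mul_left ?_
  refine ⟨32 - 2 * (2 * (n : ℤ) + 1) * t, ?_⟩
  linear_combination ((2 * (n : ℤ) + 2) * (2 * (n : ℤ) + 3) ^ 2) * hf1 +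
    (-2 * ((n : ℤ) + 2) * (2 * (n : ℤ) + 1)) * hf2 +
    (-2 * ((n : ℤ) + 2) ^ 2 * (2 * (n : ℤ) + 1)) * ht'
end
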